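/- arXiv:2308.01360 — 11 statements merged into one kernel-verified Lean document; each statement's English description precedes it below -/
import Mathlib

section
/- For a second-order cone function f of one real variable, f(x) = c x + d - ‖Ax + b‖ with A, b ∈ ℝ^m, f is strictly concave if and only if A ≠ 0 and b is not in the span of A. -/
open Matrix

noncomputable def enorm' {m : ℕ} (v : Fin m → ℝ) : ℝ := Real.sqrt (∑ i, v i ^ 2)

private lemma enorm_eq_norm {m : ℕ} (v : Fin m → ℝ) :
    enorm' v = ‖(WithLp.equiv 2 (Fin m → ℝ)).symm v‖ := by
  rw [EuclideanSpace.norm_eq]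
  simp [enorm', Real.norm_eq_abs, sq_abs]

theorem socf_one_var_strict_concave_iff {m : ℕ} (c d : ℝ) (A b : Fin m → ℝ) :
    StrictConcaveOn ℝ Set.univ
      (fun x : ℝ => c * x + d - enorm' (x • A + b)) ↔
    A ≠ 0 ∧ b ∉ Submodule.span ℝ {A} := by
  set e := (WithLp.equiv 2 (Fin m → ℝ)).symm with he
  set A' := e A with hA'def
  set b' := e b with hb'def
  have key : ∀ x : ℝ, enorm' (x • A + b) = ‖x • A' + b'‖ := by
    intro x
    rw [enorm_eq_norm]
    rfl
  have hAiff : A = 0 ↔ A' = 0 := by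
    constructor
    · intro h; simp [hA'def, h, he]
    · intro h
      have := congrArg (WithLp.equiv 2 (Fin m → ℝ)) h
      simpa [hA'def, he] using this
  have hbiff : ∀ t : ℝ, t • A = b ↔ t • A' = b' := by
    intro t
    constructor
    · intro h; rw [hA'def, hb'def, ← h, he, WithLp.equiv_symm_apply, WithLp.toLp_smul]
    · intro h
      have := congrArg (WithLp.equiv 2 (Fin m → ℝ)) h
      simpa [hA'def, hb'def, he] using this
  constructor
  · rintro ⟨-, hst⟩
    constructor
    · rintro rfl
      have h := hst (Set.mem_univ (0:ℝ)) (Set.mem_univ (1:ℝ)) (by norm_num)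
        (show (0:ℝ) < 1/2 by norm_num) (show (0:ℝ) < 1/2 by norm_num)
        (show (1:ℝ)/2 + 1/2 = 1 by norm_num)
      simp only [smul_eq_mul] at h
      have hz : ∀ x : ℝ, enorm' (x • (0 : Fin m → ℝ) + b) = enorm' b := by
        intro x; simp
      rw [hz, hz, hz] at h
      linarith
    · intro hbmem
      rw [Submodule.mem_span_singleton] at hbmem
      obtain ⟨t, ht⟩ := hbmem
      have hlin : ∀ x : ℝ, enorm' (x • A + b) = |x + t| * enorm' A := by
        intro x
        rw [← ht]
        have hx : x • A + t • A = (x + t) • A := by rw [add_smul]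
        rw [hx, enorm_eq_norm, enorm_eq_norm, WithLp.equiv_symm_apply, WithLp.toLp_smul, norm_smul,
          Real.norm_eq_abs]
      have h := hst (Set.mem_univ (-t)) (Set.mem_univ (-t + 2)) (by norm_num)
        (show (0:ℝ) < 1/2 by norm_num) (show (0:ℝ) < 1/2 by norm_num)
        (show (1:ℝ)/2 + 1/2 = 1 by norm_num)
      simp only [smul_eq_mul] at h
      rw [hlin, hlin, hlin] at h
      have e1 : |(-t : ℝ) + t| = 0 := by simp
      have e2 : |(-t + 2 : ℝ) + t| = 2 := by rw [show (-t + 2 : ℝ) + t = 2 by ring]; norm_num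
      have e3 : |(1/2 * (-t) + 1/2 * (-t + 2) : ℝ) + t| = 1 := by
        rw [show (1/2 * (-t) + 1/2 * (-t + 2) : ℝ) + t = 1 by ring]; norm_num
      rw [e1, e2, e3] at h
      have hA0 : 0 ≤ enorm' A := Real.sqrt_nonneg _
      linarith
  · rintro ⟨hA, hb⟩
    have hA' : A' ≠ 0 := fun h => hA (hAiff.mpr h)
    have hbA : ∀ t : ℝ, t • A' ≠ b' := by
      intro t h
      exact hb (Submodule.mem_span_singleton.mpr ⟨t, (hbiff t).mpr h⟩)
    refine ⟨convex_univ, fun x _ y _ hxy ta tb hta htb hab => ?_⟩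
    simp only [smul_eq_mul, key]
    have hu : ∀ z : ℝ, z • A' + b' ≠ 0 := by
      intro z h
      apply hbA (-z)
      have h1 : z • A' = -b' := add_eq_zero_iff_eq_neg.mp h
      rw [neg_smul, h1, neg_neg]
    have hray : ¬ SameRay ℝ (ta • (x • A' + b')) (tb • (y • A' + b')) := by
      rintro (h | h | ⟨r, s, hr, hs, heq⟩)
      · exact hu x ((smul_eq_zero.mp h).resolve_left hta.ne')
      · exact hu y ((smul_eq_zero.mp h).resolve_left htb.ne')
      · set p := r * ta with hp
        set q := s * tb with hq
        have hp0 : 0 < p := mul_pos hr hta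
        have hq0 : 0 < q := mul_pos hs htb
        have heq' : (p * x) • A' + p • b' = (q * y) • A' + q • b' := by
          rw [smul_smul, smul_smul, ← hp, ← hq] at heq
          calc (p * x) • A' + p • b' = p • (x • A' + b') := by
                rw [smul_add, smul_smul]
            _ = q • (y • A' + b') := heq
            _ = (q * y) • A' + q • b' := by rw [smul_add, smul_smul]
        by_cases hpq : p = q
        · rw [← hpq] at heq'
          have h2 : (p * x) • A' = (p * y) • A' := add_right_cancel heq'
          have h3 : (p * x - p * y) • A' = 0 := by rw [sub_smul, h2, sub_self]
          rcases smul_eq_zero.mp h3 with h0 | h0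
          · have hx : x = y := by
              have := sub_eq_zero.mp h0
              exact mul_left_cancel₀ hp0.ne' this
            exact hxy hx
          · exact hA' h0
        · apply hbA ((p * x - q * y) / (q - p))
          have hqp : q - p ≠ 0 := sub_ne_zero.mpr (Ne.symm hpq)
          have hs' : (p * x - q * y) • A' = (q - p) • b' := by
            have h4 : (p * x) • A' - (q * y) • A' = q • b' - p • b' := by
              rw [sub_eq_sub_iff_add_eq_add]
              rw [heq']
              abel
            rw [sub_smul, sub_smul, h4]
          rw [div_eq_inv_mul, mul_smul, hs', smul_smul, inv_mul_cancel₀ hqp, one_smul]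
    calc ta * (c * x + d - ‖x • A' + b'‖) + tb * (c * y + d - ‖y • A' + b'‖)
        = c * (ta * x + tb * y) + d - (‖ta • (x • A' + b')‖ + ‖tb • (y • A' + b')‖) := by
          rw [norm_smul, norm_smul, Real.norm_eq_abs, Real.norm_eq_abs,
            abs_of_pos hta, abs_of_pos htb]
          linear_combination d * hab
      _ < c * (ta * x + tb * y) + d - ‖ta • (x • A' + b') + tb • (y • A' + b')‖ := by
          have := norm_add_lt_of_not_sameRay hray
          linarith
      _ = c * (ta * x + tb * y) + d - ‖(ta * x + tb * y) • A' + b'‖ := by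
          congr 2
          have hcomb : ta • (x • A' + b') + tb • (y • A' + b')
              = (ta * x + tb * y) • A' + (ta + tb) • b' := by module
          rw [hcomb, hab, one_smul]
end

section
/- If A is an n×n square matrix, then the second-order cone function f(x) = c^T x + d - ‖Ax + b‖ is never strictly concave. -/
open Matrix

noncomputable def socfEnorm {m : ℕ} (v : Fin m → ℝ) : ℝ := Real.sqrt (∑ i, v i ^ 2)

lemma socfEnorm_zero {m : ℕ} : socfEnorm (0 : Fin m → ℝ) = 0 := by
  simp [socfEnorm]

lemma socfEnorm_smul {m : ℕ} (k : ℝ) (v : Fin m → ℝ) : socfEnorm (k • v) = |k| * socfEnorm v := by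
  unfold socfEnorm
  have : ∑ i, (k • v) i ^ 2 = k ^ 2 * ∑ i, v i ^ 2 := by
    rw [Finset.mul_sum]
    exact Finset.sum_congr rfl fun i _ => by simp [mul_pow]; try ring
  rw [this, Real.sqrt_mul (sq_nonneg k), Real.sqrt_sq_eq_abs]

theorem socf_square_not_strict_concave {n : ℕ} (hn : 0 < n) (c : Fin n → ℝ) (d : ℝ)
    (A : Matrix (Fin n) (Fin n) ℝ) (b : Fin n → ℝ) :
    ¬ StrictConcaveOn ℝ Set.univ
      (fun x : Fin n → ℝ => c ⬝ᵥ x + d - socfEnorm (A.mulVec x + b)) := by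
  intro h
  by_cases hdet : A.det = 0
  · obtain ⟨v, hv0, hAv⟩ := Matrix.exists_mulVec_eq_zero_iff.2 hdet
    have key := h.2 (Set.mem_univ (0 : Fin n → ℝ)) (Set.mem_univ v) (Ne.symm hv0)
      (by norm_num : (0:ℝ) < 1/2) (by norm_num : (0:ℝ) < 1/2) (by norm_num)
    simp only [smul_zero, zero_add, Matrix.mulVec_smul, hAv, Matrix.mulVec_zero,
      dotProduct_smul, dotProduct_zero, smul_zero, smul_eq_mul] at key
    linarith
  · -- A invertible
    have hA : A * A⁻¹ = 1 := A.mul_nonsing_inv (Ne.isUnit hdet)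
    set u : Fin n → ℝ := fun _ => 1 with hu
    have hu0 : u ≠ 0 := by
      intro h0
      have := congrFun h0 ⟨0, hn⟩
      simp [hu] at this
    set x0 : Fin n → ℝ := A⁻¹.mulVec (-b) with hx0
    set v : Fin n → ℝ := A⁻¹.mulVec u with hv
    have hAx0 : A.mulVec x0 = -b := by
      rw [hx0, Matrix.mulVec_mulVec, hA, Matrix.one_mulVec]
    have hAv : A.mulVec v = u := by
      rw [hv, Matrix.mulVec_mulVec, hA, Matrix.one_mulVec]
    have hvne : v ≠ 0 := by
      intro h0
      apply hu0
      rw [← hAv, h0, Matrix.mulVec_zero]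
    have hne : x0 ≠ x0 + (2:ℝ) • v := by
      intro h0
      apply hvne
      have : (2:ℝ) • v = 0 := by
        have := congrArg (fun w => w - x0) h0
        simpa using this.symm
      have := congrArg (fun w => (1/2 : ℝ) • w) this
      simpa [smul_smul] using this
    have key := h.2 (Set.mem_univ x0) (Set.mem_univ (x0 + (2:ℝ) • v)) hne
      (by norm_num : (0:ℝ) < 1/2) (by norm_num : (0:ℝ) < 1/2) (by norm_num)
    have e1 : A.mulVec x0 + b = 0 := by rw [hAx0]; simp
    have e2 : A.mulVec (x0 + (2:ℝ) • v) + b = (2:ℝ) • u := by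
      rw [Matrix.mulVec_add, Matrix.mulVec_smul, hAx0, hAv]; abel
    have e3 : A.mulVec ((1/2:ℝ) • x0 + (1/2:ℝ) • (x0 + (2:ℝ) • v)) + b = u := by
      rw [Matrix.mulVec_add, Matrix.mulVec_smul, Matrix.mulVec_smul, Matrix.mulVec_add,
        Matrix.mulVec_smul, hAx0, hAv]
      ext i
      simp
      ring
    simp only [e1, e2, e3, socfEnorm_zero, socfEnorm_smul, dotProduct_add, dotProduct_smul,
      smul_eq_mul] at key
    rw [abs_of_pos (by norm_num : (0:ℝ) < 2)] at key
    linarith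
end

section
/- Every second-order cone function on ℝ^n defined with an m×n matrix A can also be defined with an (n+1)×n matrix: there exist A' ∈ ℝ^{(n+1)×n} and b' ∈ ℝ^{n+1} such that ‖Ax + b‖ = ‖A'x + b'‖ for all x. -/
open Matrix

private lemma sq_sum_mulVec {m n : ℕ} (M : Matrix (Fin m) (Fin n) ℝ) (v : Fin n → ℝ) :
    ∑ i, (M.mulVec v) i ^ 2 = v ⬝ᵥ (Mᴴ * M).mulVec v := by
  rw [← mulVec_mulVec, dotProduct_mulVec, vecMul_conjTranspose]
  simp [dotProduct, sq]

theorem socf_reduce_rows {m n : ℕ} (A : Matrix (Fin m) (Fin n) ℝ) (b : Fin m → ℝ) :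
    ∃ (A' : Matrix (Fin (n + 1)) (Fin n) ℝ) (b' : Fin (n + 1) → ℝ),
      ∀ x : Fin n → ℝ, enorm' (A.mulVec x + b) = enorm' (A'.mulVec x + b') := by
  set B : Matrix (Fin m) (Fin (n + 1)) ℝ :=
    Matrix.of (fun i => (Fin.snoc (A i) (b i) : Fin (n + 1) → ℝ)) with hB
  have hG : (Bᴴ * B).PosSemidef := posSemidef_conjTranspose_mul_self B
  open scoped MatrixOrder in
  set S := CFC.sqrt (Bᴴ * B) with hSdef
  open scoped MatrixOrder in
  have hSsq : S * S = Bᴴ * B := CFC.sqrt_mul_sqrt_self (Bᴴ * B) hG.nonneg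
  open scoped MatrixOrder in
  have hSH : Sᴴ = S := (CFC.sqrt_nonneg (Bᴴ * B)).posSemidef.1
  refine ⟨Matrix.of (fun i j => S i j.castSucc), fun i => S i (Fin.last n), fun x => ?_⟩
  set v : Fin (n + 1) → ℝ := Fin.snoc x 1 with hv
  have h1 : A.mulVec x + b = B.mulVec v := by
    funext i
    simp only [Pi.add_apply, mulVec, dotProduct, hB, hv, Matrix.of_apply,
      Fin.sum_univ_castSucc, Fin.snoc_castSucc, Fin.snoc_last, mul_one]
  have h2 : (Matrix.of (fun i j => S i j.castSucc) : Matrix (Fin (n+1)) (Fin n) ℝ).mulVec x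
      + (fun i => S i (Fin.last n)) = S.mulVec v := by
    funext i
    simp only [Pi.add_apply, mulVec, dotProduct, hv,
      Matrix.of_apply, Fin.sum_univ_castSucc, Fin.snoc_castSucc, Fin.snoc_last, mul_one]
  rw [h1, h2]
  unfold enorm'
  rw [sq_sum_mulVec, sq_sum_mulVec, hSH, hSsq]
end

section
/- Suppose c^T x + d - sqrt(δ² + (x-x*)^T M (x-x*)) = c̃^T x + d̃ - sqrt(δ̃² + (x-x̃*)^T M̃ (x-x̃*)) for all x ∈ ℝ^n, where M, M̃ are positive semidefinite and δ, δ̃ ≥ 0. Then c̃ = c and M̃ = M. -/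
open Matrix

noncomputable def enorm {m : ℕ} (v : Fin m → ℝ) : ℝ := Real.sqrt (∑ i, v i ^ 2)

private lemma sqrt_sub_sq_le {a b : ℝ} (ha : 0 ≤ a) (hb : 0 ≤ b) :
    (Real.sqrt a - Real.sqrt b) ^ 2 ≤ |a - b| := by
  have sa := Real.sqrt_nonneg a
  have sb := Real.sqrt_nonneg b
  have h1 : Real.sqrt a ^ 2 = a := Real.sq_sqrt ha
  have h2 : Real.sqrt b ^ 2 = b := Real.sq_sqrt hb
  rcases le_total a b with h | h
  · rw [abs_of_nonpos (by linarith)]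
    have hle : Real.sqrt a ≤ Real.sqrt b := Real.sqrt_le_sqrt h
    nlinarith [mul_nonneg sa (sub_nonneg.2 hle)]
  · rw [abs_of_nonneg (by linarith)]
    have hle : Real.sqrt b ≤ Real.sqrt a := Real.sqrt_le_sqrt h
    nlinarith [mul_nonneg sb (sub_nonneg.2 hle)]

theorem socf_params_cM_unique {n : ℕ} (c ct xs xst : Fin n → ℝ) (d dt δ δt : ℝ)
    (M Mt : Matrix (Fin n) (Fin n) ℝ)
    (hM : M.PosSemidef) (hMt : Mt.PosSemidef) (hδ : 0 ≤ δ) (hδt : 0 ≤ δt)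
    (heq : ∀ x : Fin n → ℝ,
      c ⬝ᵥ x + d - Real.sqrt (δ ^ 2 + (x - xs) ⬝ᵥ M.mulVec (x - xs)) =
      ct ⬝ᵥ x + dt - Real.sqrt (δt ^ 2 + (x - xst) ⬝ᵥ Mt.mulVec (x - xst))) :
    ct = c ∧ Mt = M := by
  have hMs : ∀ a b : Fin n → ℝ, a ⬝ᵥ M *ᵥ b = b ⬝ᵥ M *ᵥ a := by
    intro a b
    have hs : Mᵀ = M := by simpa using hM.1.eq
    rw [dotProduct_mulVec, ← mulVec_transpose, hs, dotProduct_comm]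
  have hMts : ∀ a b : Fin n → ℝ, a ⬝ᵥ Mt *ᵥ b = b ⬝ᵥ Mt *ᵥ a := by
    intro a b
    have hs : Mtᵀ = Mt := by simpa using hMt.1.eq
    rw [dotProduct_mulVec, ← mulVec_transpose, hs, dotProduct_comm]
  have hQ : ∀ v : Fin n → ℝ, 0 ≤ v ⬝ᵥ M *ᵥ v := fun v => by simpa using hM.dotProduct_mulVec_nonneg v
  have hQt : ∀ v : Fin n → ℝ, 0 ≤ v ⬝ᵥ Mt *ᵥ v := fun v => by simpa using hMt.dotProduct_mulVec_nonneg v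
  have expandMt : ∀ (t : ℝ) (v : Fin n → ℝ),
      (t • v + (xs - xst)) ⬝ᵥ Mt *ᵥ (t • v + (xs - xst)) =
        t ^ 2 * (v ⬝ᵥ Mt *ᵥ v) + 2 * t * (v ⬝ᵥ Mt *ᵥ (xs - xst)) +
          (xs - xst) ⬝ᵥ Mt *ᵥ (xs - xst) := by
    intro t v
    have hsw := hMts (xs - xst) v
    simp only [mulVec_add, mulVec_smul, dotProduct_add, add_dotProduct, dotProduct_smul,
      smul_dotProduct, smul_eq_mul]
    linear_combination t * hsw
  have hAnn : ∀ (v : Fin n → ℝ) (t : ℝ),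
      0 ≤ t ^ 2 * (v ⬝ᵥ Mt *ᵥ v) + 2 * t * (v ⬝ᵥ Mt *ᵥ (xs - xst)) +
          (xs - xst) ⬝ᵥ Mt *ᵥ (xs - xst) := by
    intro v t
    have h := hQt (t • v + (xs - xst))
    rwa [expandMt t v] at h
  have key : ∀ (v : Fin n → ℝ) (t : ℝ),
      c ⬝ᵥ xs + t * (c ⬝ᵥ v) + d - Real.sqrt (δ ^ 2 + t ^ 2 * (v ⬝ᵥ M *ᵥ v)) =
      ct ⬝ᵥ xs + t * (ct ⬝ᵥ v) + dt -
        Real.sqrt (δt ^ 2 + (t ^ 2 * (v ⬝ᵥ Mt *ᵥ v) + 2 * t * (v ⬝ᵥ Mt *ᵥ (xs - xst)) +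
          (xs - xst) ⬝ᵥ Mt *ᵥ (xs - xst))) := by
    intro v t
    have h := heq (xs + t • v)
    have e1 : xs + t • v - xs = t • v := by abel
    have e2 : xs + t • v - xst = t • v + (xs - xst) := by abel
    rw [e1, e2] at h
    have eM : (t • v) ⬝ᵥ M *ᵥ (t • v) = t ^ 2 * (v ⬝ᵥ M *ᵥ v) := by
      simp [mulVec_smul, dotProduct_smul, smul_eq_mul]; ring
    rw [eM, expandMt t v] at h
    simp only [dotProduct_add, dotProduct_smul, smul_eq_mul] at h
    linear_combination h
  -- Step 1 : ct = c
  have hcv : ∀ v : Fin n → ℝ, ct ⬝ᵥ v = c ⬝ᵥ v := by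
    intro v
    by_contra hne
    set β := c ⬝ᵥ v - ct ⬝ᵥ v with hβdef
    have hβ : β ≠ 0 := fun h => hne (sub_eq_zero.mp h).symm
    have hβ2 : 0 < β ^ 2 := by positivity
    set R := v ⬝ᵥ Mt *ᵥ (xs - xst) with hRdef
    set S := (xs - xst) ⬝ᵥ Mt *ᵥ (xs - xst) with hSdef
    set qt := v ⬝ᵥ Mt *ᵥ v with hqtdef
    set t : ℝ := (|R| + 1) / β ^ 2 with htdef
    have ht : 0 < t := by positivity
    have h1 := key v t
    have h2 := key v (-t)
    rw [neg_sq] at h2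
    have hA1 : 0 ≤ δt ^ 2 + (t ^ 2 * qt + 2 * t * R + S) := by
      have := hAnn v t; nlinarith [sq_nonneg δt]
    have hA2 : 0 ≤ δt ^ 2 + (t ^ 2 * qt + 2 * -t * R + S) := by
      have := hAnn v (-t); rw [neg_sq] at this; nlinarith [sq_nonneg δt]
    have hd : Real.sqrt (δt ^ 2 + (t ^ 2 * qt + 2 * t * R + S)) -
        Real.sqrt (δt ^ 2 + (t ^ 2 * qt + 2 * -t * R + S)) = -(2 * t * β) := by
      linear_combination h1 - h2
    have hbd := sqrt_sub_sq_le hA1 hA2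
    have habs : |(δt ^ 2 + (t ^ 2 * qt + 2 * t * R + S)) -
        (δt ^ 2 + (t ^ 2 * qt + 2 * -t * R + S))| = 4 * t * |R| := by
      rw [show (δt ^ 2 + (t ^ 2 * qt + 2 * t * R + S)) -
          (δt ^ 2 + (t ^ 2 * qt + 2 * -t * R + S)) = (4 * t) * R by ring, abs_mul,
        abs_of_pos (by linarith : (0:ℝ) < 4 * t)]
    rw [hd, habs] at hbd
    have htb : t * β ^ 2 = |R| + 1 := div_mul_cancel₀ _ (ne_of_gt hβ2)
    have hsq : (-(2 * t * β)) ^ 2 = 4 * t * (|R| + 1) := by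
      rw [← htb]; ring
    rw [hsq] at hbd
    linarith
  have hc : ct = c := by
    funext i
    have := hcv (Pi.single i 1)
    simpa [dotProduct_single] using this
  subst hc
  refine ⟨rfl, ?_⟩
  -- Step 2 : Mt = M
  have hQeq : ∀ v : Fin n → ℝ, v ⬝ᵥ Mt *ᵥ v = v ⬝ᵥ M *ᵥ v := by
    intro v
    set q := v ⬝ᵥ M *ᵥ v with hqdef
    set qt := v ⬝ᵥ Mt *ᵥ v with hqtdef
    set R := v ⬝ᵥ Mt *ᵥ (xs - xst) with hRdef
    set S := (xs - xst) ⬝ᵥ Mt *ᵥ (xs - xst) with hSdef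
    have hq : 0 ≤ q := hQ v
    have key2 : ∀ t : ℝ,
        Real.sqrt (δt ^ 2 + (t ^ 2 * qt + 2 * t * R + S)) =
          Real.sqrt (δ ^ 2 + t ^ 2 * q) + (dt - d) := by
      intro t
      have h := key v t
      linarith [h]
    have P : ∀ t : ℝ,
        ((qt - q) * t ^ 2 + (δt ^ 2 + S - δ ^ 2 - (dt - d) ^ 2)) ^ 2 =
          4 * (dt - d) ^ 2 * (δ ^ 2 + t ^ 2 * q) := by
      intro t
      have hF : 0 ≤ δ ^ 2 + t ^ 2 * q := by nlinarith [sq_nonneg δ, mul_nonneg (sq_nonneg t) hq]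
      have hAp : 0 ≤ δt ^ 2 + (t ^ 2 * qt + 2 * t * R + S) := by
        have := hAnn v t; nlinarith [sq_nonneg δt]
      have hAm : 0 ≤ δt ^ 2 + (t ^ 2 * qt + 2 * -t * R + S) := by
        have := hAnn v (-t); rw [neg_sq] at this; nlinarith [sq_nonneg δt]
      have h1 := key2 t
      have h2 := key2 (-t)
      rw [neg_sq] at h2
      have hsF : Real.sqrt (δ ^ 2 + t ^ 2 * q) ^ 2 = δ ^ 2 + t ^ 2 * q := Real.sq_sqrt hF
      have hA1 : δt ^ 2 + (t ^ 2 * qt + 2 * t * R + S) =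
          (Real.sqrt (δ ^ 2 + t ^ 2 * q) + (dt - d)) ^ 2 := by
        rw [← h1, Real.sq_sqrt hAp]
      have hA2 : δt ^ 2 + (t ^ 2 * qt + 2 * -t * R + S) =
          (Real.sqrt (δ ^ 2 + t ^ 2 * q) + (dt - d)) ^ 2 := by
        rw [← h2, Real.sq_sqrt hAm]
      have hsum : (qt - q) * t ^ 2 + (δt ^ 2 + S - δ ^ 2 - (dt - d) ^ 2) =
          2 * (dt - d) * Real.sqrt (δ ^ 2 + t ^ 2 * q) := by
        linear_combination hA1 / 2 + hA2 / 2 + hsF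
      calc ((qt - q) * t ^ 2 + (δt ^ 2 + S - δ ^ 2 - (dt - d) ^ 2)) ^ 2
          = (2 * (dt - d) * Real.sqrt (δ ^ 2 + t ^ 2 * q)) ^ 2 := by rw [hsum]
        _ = 4 * (dt - d) ^ 2 * (δ ^ 2 + t ^ 2 * q) := by
            rw [mul_pow, mul_pow, hsF]; ring
    have h0 := P 0
    have h1 := P 1
    have h2 := P 2
    have hu2 : (qt - q) ^ 2 = 0 := by linear_combination (h2 + 3 * h0 - 4 * h1) / 12
    have hu : qt - q = 0 := by
      exact sq_eq_zero_iff.mp (by rw [sq]; linear_combination hu2)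
    linarith
  ext i j
  have h1 := hQeq (Pi.single i 1)
  have h2 := hQeq (Pi.single j 1)
  have h3 := hQeq (Pi.single i 1 + Pi.single j 1)
  have sM : M j i = M i j := by
    have := hMs (Pi.single j 1) (Pi.single i 1)
    simpa [mulVec_single, dotProduct_single] using this
  have sMt : Mt j i = Mt i j := by
    have := hMts (Pi.single j 1) (Pi.single i 1)
    simpa [mulVec_single, dotProduct_single] using this
  simp only [mulVec_add, mulVec_single, dotProduct_add, add_dotProduct, dotProduct_single,
    single_dotProduct, mul_one, one_mul, MulOpposite.op_one, one_smul, col_apply] at h1 h2 h3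
  linarith [h1, h2, h3, sM, sMt]
end

section
/- Suppose c^T x + d - sqrt(δ² + (x-x*)^T M (x-x*)) = c̃^T x + d̃ - sqrt(δ̃² + (x-x̃*)^T M (x-x̃*)) for all x ∈ ℝ^n, where M ≠ 0 is positive semidefinite and δ, δ̃ ≥ 0. Then c̃ = c, d̃ = d, δ̃ = δ, and M x̃* = M x*. -/
open Matrix

lemma mySqrtAdd {x y : ℝ} (hx : 0 ≤ x) (hy : 0 ≤ y) :
    Real.sqrt (x + y) ≤ Real.sqrt x + Real.sqrt y := by
  have h : x + y ≤ (Real.sqrt x + Real.sqrt y) ^ 2 := by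
    nlinarith [Real.sq_sqrt hx, Real.sq_sqrt hy, Real.sqrt_nonneg x, Real.sqrt_nonneg y]
  calc Real.sqrt (x + y) ≤ Real.sqrt ((Real.sqrt x + Real.sqrt y) ^ 2) := Real.sqrt_le_sqrt h
    _ = _ := Real.sqrt_sq (by positivity)

lemma myAbsSqrtSub {A B : ℝ} (hA : 0 ≤ A) (hB : 0 ≤ B) :
    |Real.sqrt A - Real.sqrt B| ≤ Real.sqrt |A - B| := by
  rw [abs_sub_le_iff]
  constructor
  · have h1 : Real.sqrt A ≤ Real.sqrt B + Real.sqrt |A - B| := by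
      calc Real.sqrt A ≤ Real.sqrt (B + |A - B|) := Real.sqrt_le_sqrt (by
            cases abs_cases (A - B) with
            | inl h => linarith [h.1]
            | inr h => linarith [h.1])
        _ ≤ _ := mySqrtAdd hB (abs_nonneg _)
    linarith
  · have h1 : Real.sqrt B ≤ Real.sqrt A + Real.sqrt |A - B| := by
      calc Real.sqrt B ≤ Real.sqrt (A + |A - B|) := Real.sqrt_le_sqrt (by
            cases abs_cases (A - B) with
            | inl h => linarith [h.1]
            | inr h => linarith [h.1])
        _ ≤ _ := mySqrtAdd hA (abs_nonneg _)
    linarith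

lemma myLinearBound {s b α β γ η : ℝ} (hα : 0 ≤ α) (hβ : 0 ≤ β) (hγ : 0 ≤ γ) (hη : 0 ≤ η)
    (h : ∀ t : ℝ, 0 ≤ t → |t * s + b| ≤ Real.sqrt (α + β * t) + Real.sqrt (γ + η * t)) :
    s = 0 := by
  by_contra hs
  have hs' : 0 < |s| := abs_pos.mpr hs
  set A : ℝ := Real.sqrt α + Real.sqrt γ with hA
  set B : ℝ := Real.sqrt β + Real.sqrt η with hB
  have hA0 : 0 ≤ A := by positivity
  have hB0 : 0 ≤ B := by positivity
  set u : ℝ := max 1 ((|b| + A + B + 1) / |s|) with hu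
  have hu1 : (1:ℝ) ≤ u := le_max_left _ _
  have hu0 : 0 ≤ u := by linarith
  have hu2 : |b| + A + B + 1 ≤ u * |s| := by
    rw [← div_le_iff₀ hs']
    exact le_max_right _ _
  have ht0 : (0:ℝ) ≤ u ^ 2 := sq_nonneg u
  have key := h (u ^ 2) ht0
  have hb1 : Real.sqrt (α + β * u ^ 2) ≤ Real.sqrt α + Real.sqrt β * u := by
    calc Real.sqrt (α + β * u ^ 2) ≤ Real.sqrt α + Real.sqrt (β * u ^ 2) :=
          mySqrtAdd hα (by positivity)
      _ = Real.sqrt α + Real.sqrt β * u := by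
          rw [Real.sqrt_mul hβ, Real.sqrt_sq hu0]
  have hb2 : Real.sqrt (γ + η * u ^ 2) ≤ Real.sqrt γ + Real.sqrt η * u := by
    calc Real.sqrt (γ + η * u ^ 2) ≤ Real.sqrt γ + Real.sqrt (η * u ^ 2) :=
          mySqrtAdd hγ (by positivity)
      _ = Real.sqrt γ + Real.sqrt η * u := by
          rw [Real.sqrt_mul hη, Real.sqrt_sq hu0]
  have habs : u ^ 2 * |s| - |b| ≤ |u ^ 2 * s + b| := by
    have h2 : u ^ 2 * |s| = |u ^ 2 * s| := by
      rw [abs_mul, abs_of_nonneg ht0]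
    calc u ^ 2 * |s| - |b| = |u ^ 2 * s| - |b| := by rw [h2]
      _ ≤ |u ^ 2 * s + b| := by
          have := abs_add_le (u ^ 2 * s + b) (-b)
          simp only [add_neg_cancel_right, abs_neg] at this
          linarith
  have final : u ^ 2 * |s| ≤ |b| + A + B * u := by
    have := key.trans (add_le_add hb1 hb2)
    rw [hA, hB] at *
    nlinarith [habs]
  nlinarith [mul_le_mul_of_nonneg_left hu2 hu0, mul_nonneg (sub_nonneg.mpr hu1) (abs_nonneg b),
    mul_nonneg (sub_nonneg.mpr hu1) hA0, mul_nonneg (sub_nonneg.mpr hu1) hB0]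

theorem socf_params_unique_M_ne_zero {n : ℕ} (c ct xs xst : Fin n → ℝ)
    (d dt δ δt : ℝ) (M : Matrix (Fin n) (Fin n) ℝ)
    (hM : M.PosSemidef) (hM0 : M ≠ 0) (hδ : 0 ≤ δ) (hδt : 0 ≤ δt)
    (heq : ∀ x : Fin n → ℝ,
      c ⬝ᵥ x + d - Real.sqrt (δ ^ 2 + (x - xs) ⬝ᵥ M.mulVec (x - xs)) =
      ct ⬝ᵥ x + dt - Real.sqrt (δt ^ 2 + (x - xst) ⬝ᵥ M.mulVec (x - xst))) :
    ct = c ∧ dt = d ∧ δt = δ ∧ M.mulVec xst = M.mulVec xs := by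
  have hMt : Mᵀ = M := by
    rw [← M.conjTranspose_eq_transpose_of_trivial]; exact hM.1
  have hQnn : ∀ v : Fin n → ℝ, 0 ≤ v ⬝ᵥ M.mulVec v := by
    intro v; simpa using hM.dotProduct_mulVec_nonneg v
  have hsym : ∀ u w : Fin n → ℝ, u ⬝ᵥ M.mulVec w = w ⬝ᵥ M.mulVec u := by
    intro u w
    calc u ⬝ᵥ M.mulVec w = (u ᵥ* M) ⬝ᵥ w := dotProduct_mulVec u M w
      _ = (Mᵀ *ᵥ u) ⬝ᵥ w := by rw [mulVec_transpose]
      _ = (M *ᵥ u) ⬝ᵥ w := by rw [hMt]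
      _ = w ⬝ᵥ M.mulVec u := dotProduct_comm _ _
  have hexp : ∀ u w : Fin n → ℝ, (u - w) ⬝ᵥ M.mulVec (u - w) =
      u ⬝ᵥ M.mulVec u - 2 * (u ⬝ᵥ M.mulVec w) + w ⬝ᵥ M.mulVec w := by
    intro u w
    simp only [mulVec_sub, sub_dotProduct, dotProduct_sub]
    rw [hsym w u]; ring
  have bound : ∀ (z : Fin n → ℝ) (θ : ℝ) (t : ℝ), 0 ≤ t → ∀ v : Fin n → ℝ,
      |Real.sqrt (θ ^ 2 + (t • v - z) ⬝ᵥ M.mulVec (t • v - z)) -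
        Real.sqrt ((t • v) ⬝ᵥ M.mulVec (t • v))| ≤
      Real.sqrt ((θ ^ 2 + z ⬝ᵥ M.mulVec z) + (2 * |v ⬝ᵥ M.mulVec z|) * t) := by
    intro z θ t ht v
    have h1 : 0 ≤ θ ^ 2 + (t • v - z) ⬝ᵥ M.mulVec (t • v - z) := by
      have := hQnn (t • v - z); positivity
    have h2 := hQnn (t • v)
    refine (myAbsSqrtSub h1 h2).trans (Real.sqrt_le_sqrt ?_)
    have hsmul : (t • v) ⬝ᵥ M.mulVec z = t * (v ⬝ᵥ M.mulVec z) := by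
      rw [smul_dotProduct]; simp
    have hrw : θ ^ 2 + (t • v - z) ⬝ᵥ M.mulVec (t • v - z) - (t • v) ⬝ᵥ M.mulVec (t • v)
        = (θ ^ 2 + z ⬝ᵥ M.mulVec z) - 2 * t * (v ⬝ᵥ M.mulVec z) := by
      rw [hexp (t • v) z, hsmul]; ring
    rw [hrw]
    have hz := hQnn z
    rcases abs_cases (v ⬝ᵥ M.mulVec z) with h | h <;>
      rcases abs_cases ((θ ^ 2 + z ⬝ᵥ M.mulVec z) - 2 * t * (v ⬝ᵥ M.mulVec z)) with h' | h' <;>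
      nlinarith [h.1, h'.1, ht, sq_nonneg θ, mul_nonneg ht (abs_nonneg (v ⬝ᵥ M.mulVec z))]
  -- Step 1: linear parts agree
  have hdot : ∀ v : Fin n → ℝ, c ⬝ᵥ v - ct ⬝ᵥ v = 0 := by
    intro v
    apply myLinearBound (b := d - dt)
      (α := δ ^ 2 + xs ⬝ᵥ M.mulVec xs) (β := 2 * |v ⬝ᵥ M.mulVec xs|)
      (γ := δt ^ 2 + xst ⬝ᵥ M.mulVec xst) (η := 2 * |v ⬝ᵥ M.mulVec xst|)
    · have := hQnn xs; positivity
    · positivity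
    · have := hQnn xst; positivity
    · positivity
    intro t ht
    have he := heq (t • v)
    have hc : c ⬝ᵥ (t • v) = t * (c ⬝ᵥ v) := by rw [dotProduct_smul]; simp
    have hc' : ct ⬝ᵥ (t • v) = t * (ct ⬝ᵥ v) := by rw [dotProduct_smul]; simp
    rw [hc, hc'] at he
    set F := Real.sqrt (δ ^ 2 + (t • v - xs) ⬝ᵥ M.mulVec (t • v - xs)) with hF
    set G := Real.sqrt (δt ^ 2 + (t • v - xst) ⬝ᵥ M.mulVec (t • v - xst)) with hG
    set R := Real.sqrt ((t • v) ⬝ᵥ M.mulVec (t • v)) with hR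
    have hFG : t * (c ⬝ᵥ v - ct ⬝ᵥ v) + (d - dt) = F - G := by linarith [he]
    rw [hFG]
    have b1 := bound xs δ t ht v
    have b2 := bound xst δt t ht v
    rw [← hF, ← hR] at b1
    rw [← hG, ← hR] at b2
    have tri : |F - G| ≤ |F - R| + |G - R| := by
      have h3 : F - G = (F - R) - (G - R) := by ring
      rw [h3]; exact abs_sub _ _
    exact tri.trans (add_le_add b1 b2)
  have hct : ct = c := by
    funext i
    have := hdot (Pi.single i 1)
    simp [dotProduct_single] at this
    linarith
  -- constant difference
  have hb : ∀ x : Fin n → ℝ,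
      Real.sqrt (δ ^ 2 + (x - xs) ⬝ᵥ M.mulVec (x - xs)) =
      Real.sqrt (δt ^ 2 + (x - xst) ⬝ᵥ M.mulVec (x - xst)) + (d - dt) := by
    intro x
    have := heq x
    rw [hct] at this
    linarith
  -- Step 2: M xst = M xs
  have hMp : M.mulVec (xs - xst) = 0 := by
    have hdotp : ∀ u : Fin n → ℝ, u ⬝ᵥ M.mulVec (xs - xst) = 0 := by
      intro u
      have e1 := hb (xs + u)
      have e2 := hb (xs - u)
      have hu1 : xs + u - xs = u := by abel
      have hu2 : xs - u - xs = -u := by abel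
      rw [hu1] at e1
      rw [hu2] at e2
      have hneg : (-u) ⬝ᵥ M.mulVec (-u) = u ⬝ᵥ M.mulVec u := by
        simp [mulVec_neg]
      rw [hneg] at e2
      have eG : Real.sqrt (δt ^ 2 + (xs + u - xst) ⬝ᵥ M.mulVec (xs + u - xst)) =
          Real.sqrt (δt ^ 2 + (xs - u - xst) ⬝ᵥ M.mulVec (xs - u - xst)) := by
        linarith
      have hq1 : 0 ≤ δt ^ 2 + (xs + u - xst) ⬝ᵥ M.mulVec (xs + u - xst) := by
        have := hQnn (xs + u - xst); positivity
      have hq2 : 0 ≤ δt ^ 2 + (xs - u - xst) ⬝ᵥ M.mulVec (xs - u - xst) := by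
        have := hQnn (xs - u - xst); positivity
      have hquad := (Real.sqrt_inj hq1 hq2).mp eG
      have hr1 : xs + u - xst = (xs - xst) + u := by abel
      have hr2 : xs - u - xst = (xs - xst) - u := by abel
      rw [hr1, hr2] at hquad
      set p := xs - xst
      have hexp1 : (p + u) ⬝ᵥ M.mulVec (p + u) =
          p ⬝ᵥ M.mulVec p + 2 * (u ⬝ᵥ M.mulVec p) + u ⬝ᵥ M.mulVec u := by
        simp only [mulVec_add, add_dotProduct, dotProduct_add]
        rw [hsym p u]; ring
      have hexp2 : (p - u) ⬝ᵥ M.mulVec (p - u) =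
          p ⬝ᵥ M.mulVec p - 2 * (u ⬝ᵥ M.mulVec p) + u ⬝ᵥ M.mulVec u := by
        rw [hexp p u, hsym p u]
      rw [hexp1, hexp2] at hquad
      linarith
    funext i
    have h2 := hdotp (Pi.single i 1)
    rw [single_dotProduct, one_mul] at h2
    simpa using h2
  have hMeq : M.mulVec xst = M.mulVec xs := by
    have h := hMp
    rw [mulVec_sub, sub_eq_zero] at h
    exact h.symm
  have hQp : (xs - xst) ⬝ᵥ M.mulVec (xs - xst) = 0 := by
    rw [hMp, dotProduct_zero]
  -- Step 3: Q(x - xst) = Q(x - xs)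
  have hQeq : ∀ x : Fin n → ℝ,
      (x - xst) ⬝ᵥ M.mulVec (x - xst) = (x - xs) ⬝ᵥ M.mulVec (x - xs) := by
    intro x
    rw [hexp x xst, hexp x xs]
    have h1 : x ⬝ᵥ M.mulVec xst = x ⬝ᵥ M.mulVec xs := by rw [hMeq]
    have h2 : xst ⬝ᵥ M.mulVec xst = xs ⬝ᵥ M.mulVec xs := by
      calc xst ⬝ᵥ M.mulVec xst = xst ⬝ᵥ M.mulVec xs := by rw [hMeq]
        _ = xs ⬝ᵥ M.mulVec xst := hsym _ _
        _ = xs ⬝ᵥ M.mulVec xs := by rw [hMeq]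
    rw [h1, h2]
  -- Step 4: d = dt
  have hbzero : d - dt = 0 := by
    by_contra hb0
    have hGconst : ∀ x : Fin n → ℝ,
        Real.sqrt (δt ^ 2 + (x - xs) ⬝ᵥ M.mulVec (x - xs)) =
        (δ ^ 2 - δt ^ 2 - (d - dt) ^ 2) / (2 * (d - dt)) := by
      intro x
      have h1 := hb x
      rw [hQeq x] at h1
      set q := (x - xs) ⬝ᵥ M.mulVec (x - xs) with hq'
      have hq : 0 ≤ q := hQnn _
      have hF2 : (Real.sqrt (δ ^ 2 + q)) ^ 2 = δ ^ 2 + q := Real.sq_sqrt (by positivity)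
      have hG2 : (Real.sqrt (δt ^ 2 + q)) ^ 2 = δt ^ 2 + q := Real.sq_sqrt (by positivity)
      have hsq : δ ^ 2 + q = (Real.sqrt (δt ^ 2 + q) + (d - dt)) ^ 2 := by
        rw [← h1]; exact hF2.symm
      have key : 2 * (d - dt) * Real.sqrt (δt ^ 2 + q) = δ ^ 2 - δt ^ 2 - (d - dt) ^ 2 := by
        linear_combination -hsq - hG2
      rw [eq_div_iff (by intro h; exact hb0 (by linarith [mul_eq_zero.mp h])), ]
      linear_combination key
    have hQzero : ∀ v : Fin n → ℝ, v ⬝ᵥ M.mulVec v = 0 := by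
      intro v
      have h1 := hGconst (xs + v)
      have h2 := hGconst xs
      have hu1 : xs + v - xs = v := by abel
      have hu2 : xs - xs = (0 : Fin n → ℝ) := by abel
      rw [hu1] at h1
      rw [hu2] at h2
      have h0 : (0 : Fin n → ℝ) ⬝ᵥ M.mulVec 0 = 0 := by simp
      rw [h0] at h2
      have heG : Real.sqrt (δt ^ 2 + v ⬝ᵥ M.mulVec v) = Real.sqrt (δt ^ 2 + 0) := by
        rw [h1, h2]
      have hq1 : 0 ≤ δt ^ 2 + v ⬝ᵥ M.mulVec v := by have := hQnn v; positivity
      have hq2 : 0 ≤ δt ^ 2 + (0:ℝ) := by positivity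
      have := (Real.sqrt_inj hq1 hq2).mp heG
      linarith
    have hMzero : M = 0 := by
      have hmv : ∀ v : Fin n → ℝ, M.mulVec v = 0 := by
        intro v
        have := (hM.dotProduct_mulVec_zero_iff v).mp (by simpa using hQzero v)
        exact this
      ext i j
      have := congrFun (hmv (Pi.single j 1)) i
      simpa [mulVec_single] using this
    exact hM0 hMzero
  have hdt : dt = d := by linarith
  -- Step 5: δt = δ
  have hδeq : δt = δ := by
    have h1 := hb xs
    have hu2 : xs - xs = (0 : Fin n → ℝ) := by abel
    rw [hu2] at h1
    have h0 : (0 : Fin n → ℝ) ⬝ᵥ M.mulVec 0 = 0 := by simp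
    rw [h0, hQp, hbzero] at h1
    have hδ1 : Real.sqrt (δ ^ 2 + 0) = δ := by
      rw [add_zero, Real.sqrt_sq hδ]
    have hδ2 : Real.sqrt (δt ^ 2 + 0) = δt := by
      rw [add_zero, Real.sqrt_sq hδt]
    rw [hδ1, hδ2] at h1
    linarith
  exact ⟨hct, hdt, hδeq, hMeq⟩
end

section
/- Let M be positive definite and f(x) = c^T x + d - sqrt(δ² + (x-x*)^T M (x-x*)) with δ ≥ 0. Then f is bounded above if and only if c^T M^{-1} c ≤ 1. -/
open Matrix

theorem socf_bounded_above_iff_posdef {n : ℕ} (c xs : Fin n → ℝ) (d δ : ℝ)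
    (M : Matrix (Fin n) (Fin n) ℝ) (hM : M.PosDef) (hδ : 0 ≤ δ)
    (f : (Fin n → ℝ) → ℝ)
    (hf : ∀ x, f x = c ⬝ᵥ x + d - Real.sqrt (δ ^ 2 + (x - xs) ⬝ᵥ M.mulVec (x - xs))) :
    (∃ K : ℝ, ∀ x, f x ≤ K) ↔ c ⬝ᵥ M⁻¹.mulVec c ≤ 1 := by
  have hdet : IsUnit M.det := isUnit_iff_ne_zero.mpr (ne_of_gt hM.det_pos)
  have hMsymm : Mᵀ = M := by
    have := hM.isHermitian
    simpa [Matrix.IsHermitian, Matrix.conjTranspose_eq_transpose_of_trivial] using this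
  -- symmetry of the bilinear form
  have hsym : ∀ u v : Fin n → ℝ, u ⬝ᵥ M.mulVec v = v ⬝ᵥ M.mulVec u := by
    intro u v
    rw [Matrix.dotProduct_mulVec, ← Matrix.mulVec_transpose, hMsymm, dotProduct_comm]
  have hMMinv : ∀ v : Fin n → ℝ, M.mulVec (M⁻¹.mulVec v) = v := by
    intro v
    rw [Matrix.mulVec_mulVec, Matrix.mul_nonsing_inv M hdet, Matrix.one_mulVec]
  set s : ℝ := c ⬝ᵥ M⁻¹.mulVec c with hs
  have hMinvPD : M⁻¹.PosDef := hM.inv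
  have hq_nonneg : ∀ y : Fin n → ℝ, 0 ≤ y ⬝ᵥ M.mulVec y := by
    intro y
    have := hM.posSemidef.dotProduct_mulVec_nonneg y
    simpa using this
  have hs_nonneg : 0 ≤ s := by
    have := hMinvPD.posSemidef.dotProduct_mulVec_nonneg c
    simpa [hs] using this
  -- Cauchy-Schwarz: (c ⬝ᵥ y)^2 ≤ s * (y ⬝ᵥ M y)
  have hCS : ∀ y : Fin n → ℝ, (c ⬝ᵥ y) ^ 2 ≤ s * (y ⬝ᵥ M.mulVec y) := by
    intro y
    have key : ∀ t : ℝ, 0 ≤ y ⬝ᵥ M.mulVec y - 2 * t * (c ⬝ᵥ y) + t ^ 2 * s := by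
      intro t
      have h0 : 0 ≤ (y - t • M⁻¹.mulVec c) ⬝ᵥ M.mulVec (y - t • M⁻¹.mulVec c) :=
        hq_nonneg _
      have hexp : (y - t • M⁻¹.mulVec c) ⬝ᵥ M.mulVec (y - t • M⁻¹.mulVec c)
          = y ⬝ᵥ M.mulVec y - 2 * t * (c ⬝ᵥ y) + t ^ 2 * s := by
        have h1 : M.mulVec (t • M⁻¹.mulVec c) = t • c := by
          rw [Matrix.mulVec_smul, hMMinv]
        rw [Matrix.mulVec_sub, sub_dotProduct, dotProduct_sub,
          dotProduct_sub, h1]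
        have h2 : (t • M⁻¹.mulVec c) ⬝ᵥ M.mulVec y = t * (c ⬝ᵥ y) := by
          rw [hsym, h1]
          simp [dotProduct_smul, dotProduct_comm y c]
        have h3 : y ⬝ᵥ (t • c) = t * (c ⬝ᵥ y) := by
          simp [dotProduct_smul, dotProduct_comm y c]
        have h4 : (t • M⁻¹.mulVec c) ⬝ᵥ (t • c) = t ^ 2 * s := by
          rw [smul_dotProduct, dotProduct_smul,
            dotProduct_comm (M⁻¹.mulVec c) c, ← hs, smul_eq_mul, smul_eq_mul]
          ring
        rw [h2, h3, h4]
        ring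
      linarith [h0, hexp ▸ h0]
    rcases eq_or_lt_of_le hs_nonneg with hs0 | hs0
    · -- s = 0 : then M⁻¹ c = 0 hence c = 0
      have hc0 : M⁻¹.mulVec c = 0 := by
        by_contra h
        have := hMinvPD.dotProduct_mulVec_pos (x := c) ?_
        · simp only [star_trivial] at this
          rw [← hs] at this
          linarith
        · intro hc
          apply h
          rw [hc]; simp
      have hc : c = 0 := by
        have := congrArg M.mulVec hc0
        rwa [hMMinv, Matrix.mulVec_zero] at this
      simp only [hc, zero_dotProduct, ne_eq, OfNat.ofNat_ne_zero,
        not_false_eq_true, zero_pow]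
      exact mul_nonneg hs_nonneg (hq_nonneg y)
    · have h0 := key ((c ⬝ᵥ y) / s)
      have e : y ⬝ᵥ M.mulVec y - 2 * ((c ⬝ᵥ y) / s) * (c ⬝ᵥ y)
          + ((c ⬝ᵥ y) / s) ^ 2 * s = y ⬝ᵥ M.mulVec y - (c ⬝ᵥ y) ^ 2 / s := by
        field_simp
        ring
      have hq' : (c ⬝ᵥ y) ^ 2 / s ≤ y ⬝ᵥ M.mulVec y := by linarith [h0, e]
      have h2 := (div_le_iff₀ hs0).mp hq'
      rw [mul_comm]
      exact h2
  constructor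
  · -- bounded above → s ≤ 1
    rintro ⟨K, hK⟩
    by_contra hs1
    push_neg at hs1
    have hs_pos : 0 < s := lt_trans one_pos hs1
    have hsq : 1 < Real.sqrt s := by
      rw [show (1:ℝ) = Real.sqrt 1 by simp]
      exact Real.sqrt_lt_sqrt (by norm_num) hs1
    set t : ℝ := max 0 ((K + δ + 1 - (c ⬝ᵥ xs + d)) / (Real.sqrt s * (Real.sqrt s - 1))) with ht
    have ht0 : 0 ≤ t := le_max_left _ _
    set x : Fin n → ℝ := xs + t • M⁻¹.mulVec c with hx
    have hxy : x - xs = t • M⁻¹.mulVec c := by rw [hx]; abel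
    have hcy : c ⬝ᵥ (x - xs) = t * s := by
      rw [hxy]; simp [dotProduct_smul, hs]
    have hq : (x - xs) ⬝ᵥ M.mulVec (x - xs) = t ^ 2 * s := by
      rw [hxy, Matrix.mulVec_smul, hMMinv, smul_dotProduct,
        dotProduct_smul, dotProduct_comm (M⁻¹.mulVec c) c, ← hs,
        smul_eq_mul, smul_eq_mul]
      ring
    have hcx : c ⬝ᵥ x = c ⬝ᵥ xs + t * s := by
      have : c ⬝ᵥ x = c ⬝ᵥ xs + c ⬝ᵥ (x - xs) := by
        rw [← dotProduct_add]; congr 1; abel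
      rw [this, hcy]
    have hsqrt_le : Real.sqrt (δ ^ 2 + t ^ 2 * s) ≤ δ + t * Real.sqrt s := by
      rw [show δ ^ 2 + t ^ 2 * s = δ^2 + (t * Real.sqrt s)^2 by
        rw [mul_pow, Real.sq_sqrt hs_pos.le]]
      have h1 : 0 ≤ t * Real.sqrt s := mul_nonneg ht0 (Real.sqrt_nonneg s)
      rw [show δ^2 + (t * Real.sqrt s)^2 = (δ + t * Real.sqrt s)^2 - 2*δ*(t*Real.sqrt s) by ring]
      calc Real.sqrt ((δ + t * Real.sqrt s)^2 - 2*δ*(t*Real.sqrt s))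
          ≤ Real.sqrt ((δ + t * Real.sqrt s)^2) := by
            apply Real.sqrt_le_sqrt; nlinarith
        _ = δ + t * Real.sqrt s := Real.sqrt_sq (by positivity)
    have hfx : K + 1 ≤ f x := by
      rw [hf x, hcx, hq]
      have hts : t * s = t * Real.sqrt s * Real.sqrt s := by
        rw [mul_assoc, Real.mul_self_sqrt hs_pos.le]
      have htbig : (K + δ + 1 - (c ⬝ᵥ xs + d)) ≤ t * (Real.sqrt s * (Real.sqrt s - 1)) := by
        have hpos : 0 < Real.sqrt s * (Real.sqrt s - 1) := by
          apply mul_pos (lt_trans one_pos hsq) (by linarith)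
        have : (K + δ + 1 - (c ⬝ᵥ xs + d)) / (Real.sqrt s * (Real.sqrt s - 1)) ≤ t :=
          le_max_right _ _
        calc (K + δ + 1 - (c ⬝ᵥ xs + d))
            = ((K + δ + 1 - (c ⬝ᵥ xs + d)) / (Real.sqrt s * (Real.sqrt s - 1))) *
              (Real.sqrt s * (Real.sqrt s - 1)) := by rw [div_mul_cancel₀ _ hpos.ne']
          _ ≤ t * (Real.sqrt s * (Real.sqrt s - 1)) := by
              exact mul_le_mul_of_nonneg_right this hpos.le
      nlinarith [hsqrt_le]
    linarith [hK x]
  · -- s ≤ 1 → bounded above by c ⬝ᵥ xs + d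
    intro hs1
    refine ⟨c ⬝ᵥ xs + d, fun x => ?_⟩
    rw [hf x]
    set y := x - xs with hy
    have hcx : c ⬝ᵥ x = c ⬝ᵥ xs + c ⬝ᵥ y := by
      rw [← dotProduct_add]; congr 1; rw [hy]; abel
    have hqy := hq_nonneg y
    have key : c ⬝ᵥ y ≤ Real.sqrt (δ ^ 2 + y ⬝ᵥ M.mulVec y) := by
      rcases le_or_gt (c ⬝ᵥ y) 0 with h | h
      · exact le_trans h (Real.sqrt_nonneg _)
      · rw [show c ⬝ᵥ y = Real.sqrt ((c ⬝ᵥ y)^2) from (Real.sqrt_sq h.le).symm]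
        apply Real.sqrt_le_sqrt
        have := hCS y
        nlinarith [sq_nonneg δ]
    rw [hcx]
    linarith
end

section
/- Let M be positive definite, δ = 0, and c^T M^{-1} c < 1. Then f(x) = c^T x + d - sqrt((x-x*)^T M (x-x*)) attains its global maximum value c^T x* + d uniquely at x = x*. -/
open Matrix

private lemma matrix_cs {n : ℕ} {M : Matrix (Fin n) (Fin n) ℝ} (hM : M.PosDef)
    (u y : Fin n → ℝ) :
    (u ⬝ᵥ M *ᵥ y) * (u ⬝ᵥ M *ᵥ y) ≤ (u ⬝ᵥ M *ᵥ u) * (y ⬝ᵥ M *ᵥ y) := by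
  have h := @real_inner_mul_inner_self_le (Fin n → ℝ) (M.toSeminormedAddCommGroup hM.posSemidef)
    (M.toInnerProductSpace hM.posSemidef) u y
  have e : ∀ a b : Fin n → ℝ, (M *ᵥ b) ⬝ᵥ star a = a ⬝ᵥ M *ᵥ b := fun a b => by
    rw [star_trivial, dotProduct_comm]
  change ((M *ᵥ y) ⬝ᵥ star u) * ((M *ᵥ y) ⬝ᵥ star u) ≤
    ((M *ᵥ u) ⬝ᵥ star u) * ((M *ᵥ y) ⬝ᵥ star y) at h
  simpa only [e] using h

theorem socf_max_case1 {n : ℕ} (c xs : Fin n → ℝ) (d : ℝ)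
    (M : Matrix (Fin n) (Fin n) ℝ) (hM : M.PosDef)
    (hc : c ⬝ᵥ M⁻¹.mulVec c < 1)
    (f : (Fin n → ℝ) → ℝ)
    (hf : ∀ x, f x = c ⬝ᵥ x + d - Real.sqrt ((x - xs) ⬝ᵥ M.mulVec (x - xs))) :
    f xs = c ⬝ᵥ xs + d ∧ ∀ x, x ≠ xs → f x < f xs := by
  have hinv := hM.isUnit.invertible
  constructor
  · rw [hf]; simp
  intro x hx
  rw [hf, hf]
  simp only [sub_self, Matrix.mulVec_zero, dotProduct_zero, Real.sqrt_zero, sub_zero]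
  set y := x - xs with hy
  have hy0 : y ≠ 0 := sub_ne_zero.mpr hx
  have hyMy : 0 < y ⬝ᵥ M *ᵥ y := by
    have := hM.dotProduct_mulVec_pos hy0
    simpa using this
  set u := M⁻¹ *ᵥ c with hu
  have hcu : M *ᵥ u = c := by
    rw [hu, Matrix.mulVec_mulVec, Matrix.mul_inv_of_invertible, Matrix.one_mulVec]
  have hsym : Mᵀ = M := by simpa using hM.isHermitian.eq
  have hcy : c ⬝ᵥ y = u ⬝ᵥ M *ᵥ y := by
    rw [← hcu, Matrix.dotProduct_mulVec, ← Matrix.mulVec_transpose, hsym]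
  have huMu : u ⬝ᵥ M *ᵥ u = c ⬝ᵥ M⁻¹ *ᵥ c := by
    rw [hcu]
    rw [hu, dotProduct_comm]
  have hcs := matrix_cs hM u y
  rw [huMu] at hcs
  have h2 : (c ⬝ᵥ y) * (c ⬝ᵥ y) < y ⬝ᵥ M *ᵥ y := by
    calc (c ⬝ᵥ y) * (c ⬝ᵥ y) ≤ (c ⬝ᵥ M⁻¹ *ᵥ c) * (y ⬝ᵥ M *ᵥ y) := by rw [hcy]; exact hcs
    _ < 1 * (y ⬝ᵥ M *ᵥ y) := by exact mul_lt_mul_of_pos_right hc hyMy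
    _ = y ⬝ᵥ M *ᵥ y := one_mul _
  have hlt : c ⬝ᵥ y < Real.sqrt (y ⬝ᵥ M *ᵥ y) := by
    have h3 : c ⬝ᵥ y ≤ |c ⬝ᵥ y| := le_abs_self _
    have h4 : |c ⬝ᵥ y| < Real.sqrt (y ⬝ᵥ M *ᵥ y) := by
      rw [← Real.sqrt_mul_self (abs_nonneg _), abs_mul_abs_self]
      exact Real.sqrt_lt_sqrt (mul_self_nonneg _) h2
    linarith
  have hsplit : c ⬝ᵥ x = c ⬝ᵥ xs + c ⬝ᵥ y := by
    rw [hy, dotProduct_sub]; ring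
  linarith
end

section
/- Let M be positive definite, δ = 0, and c^T M^{-1} c = 1. Then f(x) = c^T x + d - sqrt((x-x*)^T M (x-x*)) attains its global maximum value c^T x* + d at every point of the ray {x* + t M^{-1} c : t ≥ 0}. -/
open Matrix

lemma cs_aux {n : ℕ} (M : Matrix (Fin n) (Fin n) ℝ) (hM : M.PosDef)
    (u v : Fin n → ℝ) :
    u ⬝ᵥ M.mulVec v ≤ Real.sqrt (u ⬝ᵥ M.mulVec u) * Real.sqrt (v ⬝ᵥ M.mulVec v) := by
  have h := @real_inner_le_norm (Fin n → ℝ) (M.toSeminormedAddCommGroup hM.posSemidef)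
    (M.toInnerProductSpace hM.posSemidef) u v
  have hnu := @norm_eq_sqrt_real_inner (Fin n → ℝ) (M.toSeminormedAddCommGroup hM.posSemidef)
    (M.toInnerProductSpace hM.posSemidef) u
  have hnv := @norm_eq_sqrt_real_inner (Fin n → ℝ) (M.toSeminormedAddCommGroup hM.posSemidef)
    (M.toInnerProductSpace hM.posSemidef) v
  rw [hnu, hnv] at h
  change (M *ᵥ v) ⬝ᵥ star u ≤ Real.sqrt ((M *ᵥ u) ⬝ᵥ star u) * Real.sqrt ((M *ᵥ v) ⬝ᵥ star v) at h
  simp only [star_trivial] at h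
  rw [dotProduct_comm (M *ᵥ v) u, dotProduct_comm (M *ᵥ u) u, dotProduct_comm (M *ᵥ v) v] at h
  exact h

theorem socf_max_case2 {n : ℕ} (c xs : Fin n → ℝ) (d : ℝ)
    (M : Matrix (Fin n) (Fin n) ℝ) (hM : M.PosDef)
    (hc : c ⬝ᵥ M⁻¹.mulVec c = 1)
    (f : (Fin n → ℝ) → ℝ)
    (hf : ∀ x, f x = c ⬝ᵥ x + d - Real.sqrt ((x - xs) ⬝ᵥ M.mulVec (x - xs))) :
    (∀ x, f x ≤ c ⬝ᵥ xs + d) ∧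
      ∀ t : ℝ, 0 ≤ t → f (xs + t • M⁻¹.mulVec c) = c ⬝ᵥ xs + d := by
  have hdet : IsUnit M.det := isUnit_iff_ne_zero.mpr hM.det_pos.ne'
  have hMMinv : ∀ w : Fin n → ℝ, M.mulVec (M⁻¹.mulVec w) = w := by
    intro w
    rw [Matrix.mulVec_mulVec, Matrix.mul_nonsing_inv M hdet, Matrix.one_mulVec]
  set u := M⁻¹.mulVec c with hu
  have huMu : u ⬝ᵥ M.mulVec u = 1 := by
    rw [hMMinv c, dotProduct_comm, hc]
  have hsym : Mᵀ = M := hM.isHermitian.eq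
  have hcy : ∀ y : Fin n → ℝ, u ⬝ᵥ M.mulVec y = c ⬝ᵥ y := by
    intro y
    rw [Matrix.dotProduct_mulVec, ← Matrix.mulVec_transpose, hsym, hMMinv c]
  constructor
  · intro x
    rw [hf x]
    have h := cs_aux M hM u (x - xs)
    rw [huMu, Real.sqrt_one, one_mul, hcy] at h
    have : c ⬝ᵥ (x - xs) = c ⬝ᵥ x - c ⬝ᵥ xs := by
      rw [dotProduct_sub]
    linarith [h, this.symm ▸ h]
  · intro t ht
    rw [hf]
    have h1 : (xs + t • u) - xs = t • u := by abel
    have h2 : c ⬝ᵥ (xs + t • u) = c ⬝ᵥ xs + t := by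
      rw [dotProduct_add, dotProduct_smul, hu, hc]
      simp
    rw [h1, h2]
    have h3 : (t • u) ⬝ᵥ M.mulVec (t • u) = t ^ 2 := by
      rw [Matrix.mulVec_smul, smul_dotProduct, dotProduct_smul, huMu]
      ring_nf
    rw [h3, Real.sqrt_sq ht]
    ring
end

section
/- Let M be positive definite, δ > 0, and c^T M^{-1} c = 1. Then f(x) = c^T x + d - sqrt(δ² + (x-x*)^T M (x-x*)) satisfies f(x) < c^T x* + d for all x, but sup f = c^T x* + d is not attained. -/
open Matrix

theorem socf_max_case5 {n : ℕ} (c xs : Fin n → ℝ) (d δ : ℝ)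
    (M : Matrix (Fin n) (Fin n) ℝ) (hM : M.PosDef) (hδ : 0 < δ)
    (hc : c ⬝ᵥ M⁻¹.mulVec c = 1)
    (f : (Fin n → ℝ) → ℝ)
    (hf : ∀ x, f x = c ⬝ᵥ x + d - Real.sqrt (δ ^ 2 + (x - xs) ⬝ᵥ M.mulVec (x - xs))) :
    (∀ x, f x < c ⬝ᵥ xs + d) ∧ IsLUB (Set.range f) (c ⬝ᵥ xs + d) := by
  set u : Fin n → ℝ := M⁻¹ *ᵥ c with hu
  have hMu : M *ᵥ u = c := by
    rw [hu, mulVec_mulVec, Matrix.mul_nonsing_inv _ hM.det_pos.ne'.isUnit, one_mulVec]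
  have hsym : Mᵀ = M := (by simpa using hM.1 : M.IsSymm)
  have hq : ∀ v : Fin n → ℝ, 0 ≤ v ⬝ᵥ M *ᵥ v := by
    intro v
    simpa using hM.posSemidef.dotProduct_mulVec_nonneg v
  have huMv : ∀ v : Fin n → ℝ, u ⬝ᵥ M *ᵥ v = c ⬝ᵥ v := by
    intro v
    rw [dotProduct_mulVec]
    conv_lhs => rw [← hsym]
    rw [vecMul_transpose, hMu]
  have huc : u ⬝ᵥ c = 1 := by rw [dotProduct_comm]; exact hc
  have huMu : u ⬝ᵥ M *ᵥ u = 1 := by rw [hMu]; rw [dotProduct_comm]; exact hc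
  -- Cauchy-Schwarz style bound
  have key : ∀ v : Fin n → ℝ, (c ⬝ᵥ v) ^ 2 ≤ v ⬝ᵥ M *ᵥ v := by
    intro v
    set t := c ⬝ᵥ v with ht
    have h0 : 0 ≤ (v - t • u) ⬝ᵥ M *ᵥ (v - t • u) := hq _
    have hvMu : v ⬝ᵥ M *ᵥ u = t := by rw [hMu, dotProduct_comm]
    have huMv' : u ⬝ᵥ M *ᵥ v = t := huMv v
    rw [sub_dotProduct, mulVec_sub, dotProduct_sub, dotProduct_sub, mulVec_smul,
      smul_dotProduct, smul_dotProduct, dotProduct_smul, dotProduct_smul,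
      hvMu, huMv', huMu] at h0
    simp only [smul_eq_mul, mul_one] at h0
    nlinarith [h0]
  have key' : ∀ v : Fin n → ℝ, c ⬝ᵥ v < Real.sqrt (δ ^ 2 + v ⬝ᵥ M *ᵥ v) := by
    intro v
    have h1 : c ⬝ᵥ v ≤ Real.sqrt (v ⬝ᵥ M *ᵥ v) := by
      calc c ⬝ᵥ v ≤ |c ⬝ᵥ v| := le_abs_self _
        _ = Real.sqrt ((c ⬝ᵥ v) ^ 2) := (Real.sqrt_sq_eq_abs _).symm
        _ ≤ Real.sqrt (v ⬝ᵥ M *ᵥ v) := Real.sqrt_le_sqrt (key v)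
    have h2 : Real.sqrt (v ⬝ᵥ M *ᵥ v) < Real.sqrt (δ ^ 2 + v ⬝ᵥ M *ᵥ v) :=
      Real.sqrt_lt_sqrt (hq v) (by nlinarith)
    linarith
  have hlt : ∀ x, f x < c ⬝ᵥ xs + d := by
    intro x
    rw [hf]
    have := key' (x - xs)
    have hcx : c ⬝ᵥ (x - xs) = c ⬝ᵥ x - c ⬝ᵥ xs := dotProduct_sub ..
    linarith [hcx ▸ this]
  refine ⟨hlt, ⟨?_, ?_⟩⟩
  · rintro y ⟨x, rfl⟩
    exact (hlt x).le
  · intro b hb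
    by_contra hcon
    push_neg at hcon
    set ε := c ⬝ᵥ xs + d - b with hε
    have hεpos : 0 < ε := by simp [hε]; linarith
    set t := max 1 (δ ^ 2 / (2 * ε)) with htdef
    have ht1 : (1 : ℝ) ≤ t := le_max_left _ _
    have ht0 : 0 < t := lt_of_lt_of_le one_pos ht1
    have ht2 : δ ^ 2 / (2 * ε) ≤ t := le_max_right _ _
    have hsq : Real.sqrt (δ ^ 2 + t ^ 2) < t + ε := by
      rw [Real.sqrt_lt' (by linarith)]
      have : δ ^ 2 ≤ 2 * ε * t := by
        rw [div_le_iff₀ (by linarith)] at ht2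
        linarith
      nlinarith
    set x := xs + t • u with hx
    have hv : x - xs = t • u := by rw [hx]; abel
    have hcx : c ⬝ᵥ x = c ⬝ᵥ xs + t := by
      rw [hx, dotProduct_add, dotProduct_smul, hc, smul_eq_mul, mul_one]
    have hqv : (x - xs) ⬝ᵥ M *ᵥ (x - xs) = t ^ 2 := by
      rw [hv, smul_dotProduct, mulVec_smul, dotProduct_smul, huMu, smul_eq_mul, smul_eq_mul,
        mul_one, sq]
    have hfx : f x = c ⬝ᵥ xs + d + t - Real.sqrt (δ ^ 2 + t ^ 2) := by
      rw [hf, hcx, hqv]; ring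
    have : b < f x := by rw [hfx]; simp only [hε] at hsq ⊢; linarith
    exact absurd (hb ⟨x, rfl⟩) (not_le.mpr this)
end

section
/- Let M be positive semidefinite and f(x) = c^T x + d - sqrt(δ² + (x-x*)^T M (x-x*)) with δ ≥ 0. Then f is bounded above if and only if c ∈ col(M) and c^T M⁺ c ≤ 1, where M⁺ is the Moore–Penrose pseudoinverse of M. -/
open Matrix

private lemma mulVec_dot {n : ℕ} (A : Matrix (Fin n) (Fin n) ℝ) (u v : Fin n → ℝ) :
    A.mulVec u ⬝ᵥ v = u ⬝ᵥ Aᵀ.mulVec v := by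
  rw [Matrix.dotProduct_mulVec, Matrix.vecMul_transpose, dotProduct_comm,
    Matrix.dotProduct_mulVec]

private lemma psd_nonneg {n : ℕ} {M : Matrix (Fin n) (Fin n) ℝ} (hM : M.PosSemidef)
    (x : Fin n → ℝ) : 0 ≤ x ⬝ᵥ M.mulVec x := by simpa using hM.dotProduct_mulVec_nonneg x

private lemma dot_symm {n : ℕ} {M : Matrix (Fin n) (Fin n) ℝ} (hM : Mᵀ = M)
    (u v : Fin n → ℝ) : u ⬝ᵥ M.mulVec v = v ⬝ᵥ M.mulVec u := by
  nth_rewrite 1 [← hM]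
  rw [← mulVec_dot, dotProduct_comm]

private lemma psd_cs {n : ℕ} {M : Matrix (Fin n) (Fin n) ℝ} (hM : M.PosSemidef)
    (u v : Fin n → ℝ) :
    (u ⬝ᵥ M.mulVec v) ^ 2 ≤ (u ⬝ᵥ M.mulVec u) * (v ⬝ᵥ M.mulVec v) := by
  have hsym : Mᵀ = M := hM.1
  have key : ∀ t : ℝ, 0 ≤ (v ⬝ᵥ M.mulVec v) * (t * t) +
      (2 * (u ⬝ᵥ M.mulVec v)) * t + (u ⬝ᵥ M.mulVec u) := by
    intro t
    have h := psd_nonneg hM (u + t • v)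
    have hexp : (u + t • v) ⬝ᵥ M.mulVec (u + t • v) =
        (v ⬝ᵥ M.mulVec v) * (t * t) + (2 * (u ⬝ᵥ M.mulVec v)) * t + (u ⬝ᵥ M.mulVec u) := by
      rw [Matrix.mulVec_add, Matrix.mulVec_smul, add_dotProduct,
        dotProduct_add, dotProduct_add, smul_dotProduct,
        dotProduct_smul, dotProduct_smul, dot_symm hsym v u]
      simp only [smul_eq_mul, smul_dotProduct, dotProduct_smul]
      ring
    linarith [hexp ▸ h]
  have hd := discrim_le_zero key
  rw [discrim] at hd
  nlinarith [hd]

private lemma sqrt_add_le' (a b : ℝ) (ha : 0 ≤ a) (hb : 0 ≤ b) :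
    Real.sqrt (a + b) ≤ Real.sqrt a + Real.sqrt b := by
  have h : a + b ≤ (Real.sqrt a + Real.sqrt b) ^ 2 := by
    have h1 : Real.sqrt a ^ 2 = a := Real.sq_sqrt ha
    have h2 : Real.sqrt b ^ 2 = b := Real.sq_sqrt hb
    nlinarith [Real.sqrt_nonneg a, Real.sqrt_nonneg b]
  calc Real.sqrt (a + b) ≤ Real.sqrt ((Real.sqrt a + Real.sqrt b) ^ 2) :=
        Real.sqrt_le_sqrt h
    _ = Real.sqrt a + Real.sqrt b :=
        Real.sqrt_sq (by positivity)

theorem socf_bounded_above_iff_psd {n : ℕ} (c xs : Fin n → ℝ) (d δ : ℝ)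
    (M : Matrix (Fin n) (Fin n) ℝ) (hM : M.PosSemidef) (hδ : 0 ≤ δ)
    (Mp : Matrix (Fin n) (Fin n) ℝ)
    (h1 : M * Mp * M = M) (h2 : Mp * M * Mp = Mp)
    (h3 : (M * Mp)ᵀ = M * Mp) (h4 : (Mp * M)ᵀ = Mp * M)
    (f : (Fin n → ℝ) → ℝ)
    (hf : ∀ x, f x = c ⬝ᵥ x + d - Real.sqrt (δ ^ 2 + (x - xs) ⬝ᵥ M.mulVec (x - xs))) :
    (∃ K : ℝ, ∀ x, f x ≤ K) ↔
      c ∈ Set.range M.mulVec ∧ c ⬝ᵥ Mp.mulVec c ≤ 1 := by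
  have hsym : Mᵀ = M := hM.1
  constructor
  · rintro ⟨K, hK⟩
    -- key: evaluate f on lines through xs
    have hline : ∀ (w : Fin n → ℝ) (t : ℝ),
        f (xs + t • w) = c ⬝ᵥ xs + t * (c ⬝ᵥ w) + d -
          Real.sqrt (δ ^ 2 + t ^ 2 * (w ⬝ᵥ M.mulVec w)) := by
      intro w t
      rw [hf]
      have h5 : xs + t • w - xs = t • w := by abel
      rw [h5, dotProduct_add, dotProduct_smul, Matrix.mulVec_smul,
        smul_dotProduct, dotProduct_smul]
      simp only [smul_eq_mul]
      ring_nf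
    -- step 1: c ∈ range
    set u : Fin n → ℝ := c - (M * Mp).mulVec c with hu
    have hMMp : M * (M * Mp) = M := by
      calc M * (M * Mp) = Mᵀ * (M * Mp)ᵀ := by rw [hsym, h3]
        _ = ((M * Mp) * M)ᵀ := (Matrix.transpose_mul _ _).symm
        _ = Mᵀ := by rw [h1]
        _ = M := hsym
    have hMu : M.mulVec u = 0 := by
      rw [hu, Matrix.mulVec_sub, Matrix.mulVec_mulVec, hMMp, sub_self]
    have hcu : c ⬝ᵥ u = u ⬝ᵥ u := by
      have huc : ((M * Mp).mulVec c) ⬝ᵥ u = 0 := by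
        rw [← Matrix.mulVec_mulVec, mulVec_dot, hsym, hMu, dotProduct_zero]
      have : c ⬝ᵥ u = u ⬝ᵥ u + ((M * Mp).mulVec c) ⬝ᵥ u := by
        rw [hu, sub_dotProduct]; ring
      rw [this, huc, add_zero]
    have huu : u ⬝ᵥ u = 0 := by
      by_contra h
      have hpos : 0 < u ⬝ᵥ u := lt_of_le_of_ne (by simpa using dotProduct_self_star_nonneg u) (Ne.symm h)
      set t : ℝ := (K + δ - d - c ⬝ᵥ xs + 1) / (u ⬝ᵥ u) with ht
      have hft := hK (xs + t • u)
      rw [hline u t, hcu] at hft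
      have hsq : Real.sqrt (δ ^ 2 + t ^ 2 * (u ⬝ᵥ M.mulVec u)) = δ := by
        rw [hMu, dotProduct_zero, mul_zero, add_zero, Real.sqrt_sq hδ]
      rw [hsq] at hft
      have : t * (u ⬝ᵥ u) = K + δ - d - c ⬝ᵥ xs + 1 := by
        rw [ht, div_mul_cancel₀ _ (ne_of_gt hpos)]
      linarith
    have hu0 : u = 0 := dotProduct_self_eq_zero.mp huu
    have hc : (M * Mp).mulVec c = c := by
      have h := hu0
      rw [hu, sub_eq_zero] at h
      exact h.symm
    set w : Fin n → ℝ := Mp.mulVec c with hwdef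
    have hMw : M.mulVec w = c := by
      rw [hwdef, Matrix.mulVec_mulVec, hc]
    refine ⟨⟨w, hMw⟩, ?_⟩
    set s : ℝ := c ⬝ᵥ Mp.mulVec c with hs
    have hwMw : w ⬝ᵥ M.mulVec w = s := by
      rw [hMw, dotProduct_comm, hs, hwdef]
    have hs0 : 0 ≤ s := by rw [← hwMw]; exact psd_nonneg hM w
    have hineq : ∀ t : ℝ, 0 ≤ t → t * (s - Real.sqrt s) ≤ K - c ⬝ᵥ xs - d + δ := by
      intro t ht
      have hft := hK (xs + t • w)
      rw [hline w t] at hft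
      have hcw : c ⬝ᵥ w = s := by rw [hs, hwdef]
      rw [hcw, hwMw] at hft
      have hsqle : Real.sqrt (δ ^ 2 + t ^ 2 * s) ≤ δ + t * Real.sqrt s := by
        have := sqrt_add_le' (δ ^ 2) (t ^ 2 * s) (sq_nonneg δ) (by positivity)
        have h1' : Real.sqrt (δ ^ 2) = δ := Real.sqrt_sq hδ
        have h2' : Real.sqrt (t ^ 2 * s) = t * Real.sqrt s := by
          rw [Real.sqrt_mul (sq_nonneg t), Real.sqrt_sq ht]
        linarith
      nlinarith
    have hC0 : 0 ≤ K - c ⬝ᵥ xs - d + δ := by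
      have := hineq 0 le_rfl
      linarith
    by_contra hs1
    push_neg at hs1
    have hsq_lt : Real.sqrt s < s := by
      have ha : Real.sqrt s ^ 2 = s := Real.sq_sqrt hs0
      nlinarith [Real.sqrt_nonneg s]
    set C : ℝ := K - c ⬝ᵥ xs - d + δ with hCdef
    have hpos : 0 < s - Real.sqrt s := by linarith
    have ht0 : 0 ≤ (C + 1) / (s - Real.sqrt s) := by positivity
    have := hineq ((C + 1) / (s - Real.sqrt s)) ht0
    rw [div_mul_cancel₀ _ (ne_of_gt hpos)] at this
    linarith
  · rintro ⟨⟨w, hw⟩, hle⟩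
    have hwMw : w ⬝ᵥ M.mulVec w ≤ 1 := by
      rw [← hw, mulVec_dot, hsym, Matrix.mulVec_mulVec, Matrix.mulVec_mulVec, h1] at hle
      exact hle
    refine ⟨c ⬝ᵥ xs + d, fun x => ?_⟩
    rw [hf]
    set y : Fin n → ℝ := x - xs with hy
    set q : ℝ := y ⬝ᵥ M.mulVec y with hq
    have hq0 : 0 ≤ q := psd_nonneg hM y
    have hcx : c ⬝ᵥ x = c ⬝ᵥ xs + c ⬝ᵥ y := by
      rw [hy, dotProduct_sub]; ring
    have hcy : c ⬝ᵥ y = w ⬝ᵥ M.mulVec y := by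
      rw [← hw, mulVec_dot, hsym]
    have hcs : (w ⬝ᵥ M.mulVec y) ^ 2 ≤ q := by
      calc (w ⬝ᵥ M.mulVec y) ^ 2 ≤ (w ⬝ᵥ M.mulVec w) * (y ⬝ᵥ M.mulVec y) := psd_cs hM w y
        _ ≤ 1 * q := by
            apply mul_le_mul_of_nonneg_right hwMw hq0
        _ = q := one_mul q
    have hle2 : c ⬝ᵥ y ≤ Real.sqrt (δ ^ 2 + q) := by
      rw [hcy]
      calc w ⬝ᵥ M.mulVec y ≤ |w ⬝ᵥ M.mulVec y| := le_abs_self _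
        _ = Real.sqrt ((w ⬝ᵥ M.mulVec y) ^ 2) := (Real.sqrt_sq_eq_abs _).symm
        _ ≤ Real.sqrt (δ ^ 2 + q) := Real.sqrt_le_sqrt (by nlinarith [sq_nonneg δ])
    linarith
end

section
/- Let f(x) = c^T x + d - sqrt(δ² + (x-x*)^T M (x-x*)) with M positive semidefinite and δ ≥ 0, and let R = {x ∈ ℝ^n : f(x) ≥ 0} be nonempty. Then R is closed and convex, and R is bounded if and only if M is positive definite and c^T M^{-1} c < 1. -/
open Matrix

section Aux
variable {n : ℕ}

private lemma dot_self_nonneg' (z : Fin n → ℝ) : 0 ≤ z ⬝ᵥ z :=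
  Finset.sum_nonneg fun i _ => mul_self_nonneg (z i)

private lemma quad_eq' {M B : Matrix (Fin n) (Fin n) ℝ} (hBB : B * B = M) (hBt : Bᵀ = B)
    (y : Fin n → ℝ) : y ⬝ᵥ M *ᵥ y = (B *ᵥ y) ⬝ᵥ (B *ᵥ y) := by
  rw [← hBB, ← Matrix.mulVec_mulVec, Matrix.dotProduct_mulVec, ← Matrix.mulVec_transpose, hBt]

private lemma cs_dot' (u z : Fin n → ℝ) :
    u ⬝ᵥ z ≤ Real.sqrt (u ⬝ᵥ u) * Real.sqrt (z ⬝ᵥ z) := by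
  simpa [dotProduct, sq] using Real.sum_mul_le_sqrt_mul_sqrt Finset.univ u z

private noncomputable def Wv {n : ℕ} (δ : ℝ) (z : Fin n → ℝ) : EuclideanSpace ℝ (Fin (n+1)) :=
  (WithLp.equiv 2 _).symm (Fin.cons δ z)

private lemma Wv_norm (δ : ℝ) (z : Fin n → ℝ) :
    ‖Wv δ z‖ = Real.sqrt (δ ^ 2 + z ⬝ᵥ z) := by
  rw [EuclideanSpace.norm_eq]
  congr 1
  rw [Fin.sum_univ_succ]
  simp [Wv, dotProduct, sq, Real.norm_eq_abs, sq_abs, abs_mul_abs_self]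

private lemma Wv_combo (δ a b : ℝ) (hab : a + b = 1) (z₁ z₂ : Fin n → ℝ) :
    a • Wv δ z₁ + b • Wv δ z₂ = Wv δ (a • z₁ + b • z₂) := by
  ext i
  induction i using Fin.cases with
  | zero => simp [Wv, ← add_mul, hab]
  | succ j => simp [Wv]

private lemma cont_aux (c xs : Fin n → ℝ) (M : Matrix (Fin n) (Fin n) ℝ) (d δ : ℝ) :
    Continuous fun x : Fin n → ℝ =>
      c ⬝ᵥ x + d - Real.sqrt (δ ^ 2 + (x - xs) ⬝ᵥ M.mulVec (x - xs)) := by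
  apply Continuous.sub
  · apply Continuous.add _ continuous_const
    unfold dotProduct
    fun_prop
  · apply Real.continuous_sqrt.comp
    apply Continuous.add continuous_const
    show Continuous fun x : Fin n → ℝ => ∑ i, (x - xs) i * ∑ j, M i j * (x - xs) j
    simp only [Pi.sub_apply]
    fun_prop

private lemma pinorm_le_sqrt_dot (z : Fin n → ℝ) : ‖z‖ ≤ Real.sqrt (z ⬝ᵥ z) := by
  rw [pi_norm_le_iff_of_nonneg (Real.sqrt_nonneg _)]
  intro i
  rw [Real.norm_eq_abs, ← Real.sqrt_sq_eq_abs]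
  apply Real.sqrt_le_sqrt
  have : (z i)^2 ≤ ∑ j, z j * z j := by
    rw [sq]
    exact Finset.single_le_sum (f := fun j => z j * z j)
      (fun j _ => mul_self_nonneg _) (Finset.mem_univ i)
  simpa [dotProduct] using this

private lemma unbounded_of_rays {R : Set (Fin n → ℝ)}
    (h : ∀ T : ℝ, ∃ x ∈ R, T ≤ ‖x‖) : ¬ Bornology.IsBounded R := by
  intro hb
  obtain ⟨C, hC⟩ := isBounded_iff_forall_norm_le.1 hb
  obtain ⟨x, hx, hx2⟩ := h (C + 1)
  linarith [hC x hx]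

private lemma ray_norm_big (x₀ w : Fin n → ℝ) (hw : w ≠ 0) (t₀ T : ℝ) :
    ∃ t : ℝ, 0 ≤ t ∧ t₀ ≤ t ∧ T ≤ ‖x₀ + t • w‖ := by
  have hw' : 0 < ‖w‖ := norm_pos_iff.2 hw
  refine ⟨max (max 0 t₀) ((T + ‖x₀‖) / ‖w‖), le_trans (le_max_left _ _) (le_max_left _ _),
    le_trans (le_max_right _ _) (le_max_left _ _), ?_⟩
  set t := max (max 0 t₀) ((T + ‖x₀‖) / ‖w‖) with ht
  have h1 : (T + ‖x₀‖) / ‖w‖ ≤ t := le_max_right _ _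
  have h2 : T + ‖x₀‖ ≤ t * ‖w‖ := by
    rw [← div_le_iff₀ hw']; exact h1
  have h3 : ‖t • w‖ ≤ ‖x₀ + t • w‖ + ‖x₀‖ := by
    calc ‖t • w‖ = ‖(x₀ + t • w) - x₀‖ := by ring_nf
      _ ≤ ‖x₀ + t • w‖ + ‖x₀‖ := norm_sub_le _ _
  have h4 : ‖t • w‖ = t * ‖w‖ := by
    rw [norm_smul, Real.norm_eq_abs,
      abs_of_nonneg (le_trans (le_max_left 0 t₀) (le_max_left _ _))]
  linarith

private lemma exists_mulVec_bound (A : Matrix (Fin n) (Fin n) ℝ) :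
    ∃ K : ℝ, 0 ≤ K ∧ ∀ z : Fin n → ℝ, ‖A *ᵥ z‖ ≤ K * ‖z‖ := by
  let L := LinearMap.toContinuousLinearMap A.mulVecLin
  exact ⟨‖L‖, norm_nonneg _, fun z => L.le_opNorm z⟩

open scoped MatrixOrder Matrix.Norms.L2Operator in
private lemma exists_sqrt' {M : Matrix (Fin n) (Fin n) ℝ} (hM : M.PosSemidef) :
    ∃ B : Matrix (Fin n) (Fin n) ℝ, B * B = M ∧ B.PosSemidef :=
  ⟨CFC.sqrt M, CFC.sqrt_mul_sqrt_self M hM.nonneg, (CFC.sqrt_nonneg M).posSemidef⟩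

end Aux

theorem socf_feasible_region {n : ℕ} (c xs : Fin n → ℝ) (d δ : ℝ)
    (M : Matrix (Fin n) (Fin n) ℝ) (hM : M.PosSemidef) (hδ : 0 ≤ δ)
    (f : (Fin n → ℝ) → ℝ)
    (hf : ∀ x, f x = c ⬝ᵥ x + d - Real.sqrt (δ ^ 2 + (x - xs) ⬝ᵥ M.mulVec (x - xs)))
    (R : Set (Fin n → ℝ)) (hR : R = {x | 0 ≤ f x}) (hne : R.Nonempty) :
    IsClosed R ∧ Convex ℝ R ∧
      (Bornology.IsBounded R ↔ M.PosDef ∧ c ⬝ᵥ M⁻¹.mulVec c < 1) := by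
  subst hR
  obtain ⟨B, hB2, hBps⟩ := exists_sqrt' hM
  have hBt : Bᵀ = B := by
    have h := hBps.1
    rwa [Matrix.IsHermitian, Matrix.conjTranspose_eq_transpose_of_trivial] at h
  have hMt : Mᵀ = M := by
    have h := hM.1
    rwa [Matrix.IsHermitian, Matrix.conjTranspose_eq_transpose_of_trivial] at h
  have hquad : ∀ y, y ⬝ᵥ M *ᵥ y = (B *ᵥ y) ⬝ᵥ (B *ᵥ y) := quad_eq' hB2 hBt
  have hqnn : ∀ y, 0 ≤ y ⬝ᵥ M *ᵥ y := fun y => (hquad y) ▸ dot_self_nonneg' _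
  have hmem : ∀ x, (0 ≤ f x) ↔
      Real.sqrt (δ ^ 2 + (x - xs) ⬝ᵥ M *ᵥ (x - xs)) ≤ c ⬝ᵥ x + d := by
    intro x
    rw [hf]
    constructor <;> intro h <;> [linarith; linarith]
  have hg : ∀ x, Real.sqrt (δ ^ 2 + (x - xs) ⬝ᵥ M *ᵥ (x - xs)) = ‖Wv δ (B *ᵥ (x - xs))‖ := by
    intro x; rw [Wv_norm, hquad]
  -- Cauchy-Schwarz machinery, available whenever M is positive definite
  have key : ∀ _ : M.PosDef,
      (0 ≤ c ⬝ᵥ M⁻¹ *ᵥ c) ∧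
      (∀ y : Fin n → ℝ, c ⬝ᵥ y ≤ Real.sqrt (c ⬝ᵥ M⁻¹ *ᵥ c) * Real.sqrt (y ⬝ᵥ M *ᵥ y)) := by
    intro hd
    have hdetB : IsUnit B.det := by
      rw [isUnit_iff_ne_zero]
      intro h0
      have : M.det = 0 := by rw [← hB2, Matrix.det_mul, h0, mul_zero]
      exact hd.det_pos.ne' this
    have hswap : ∀ v z : Fin n → ℝ, v ⬝ᵥ B⁻¹ *ᵥ z = (B⁻¹ *ᵥ v) ⬝ᵥ z := by
      intro v z
      rw [Matrix.dotProduct_mulVec, ← Matrix.mulVec_transpose, Matrix.transpose_nonsing_inv, hBt]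
    have hMinv : c ⬝ᵥ M⁻¹ *ᵥ c = (B⁻¹ *ᵥ c) ⬝ᵥ (B⁻¹ *ᵥ c) := by
      rw [← hB2, Matrix.mul_inv_rev, ← Matrix.mulVec_mulVec, hswap]
    refine ⟨hMinv ▸ dot_self_nonneg' _, fun y => ?_⟩
    have hy : c ⬝ᵥ y = (B⁻¹ *ᵥ c) ⬝ᵥ (B *ᵥ y) := by
      conv_lhs => rw [show y = B⁻¹ *ᵥ (B *ᵥ y) by
        rw [Matrix.mulVec_mulVec, Matrix.nonsing_inv_mul _ hdetB, Matrix.one_mulVec]]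
      rw [hswap]
    rw [hy, hMinv, hquad]
    exact cs_dot' _ _
  refine ⟨isClosed_le continuous_const (by rw [funext hf]; exact cont_aux c xs M d δ), ?_, ?_⟩
  · -- Convexity
    intro x hx y hy a b ha hb hab
    simp only [Set.mem_setOf_eq] at hx hy ⊢
    rw [hmem] at hx hy ⊢
    have hx' : ‖Wv δ (B *ᵥ (x - xs))‖ ≤ c ⬝ᵥ x + d := (hg x) ▸ hx
    have hy' : ‖Wv δ (B *ᵥ (y - xs))‖ ≤ c ⬝ᵥ y + d := (hg y) ▸ hy
    have hzc : B *ᵥ (a • x + b • y - xs) = a • (B *ᵥ (x - xs)) + b • (B *ᵥ (y - xs)) := by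
      have h0 : a • x + b • y - xs = a • (x - xs) + b • (y - xs) := by
        ext i
        simp only [Pi.add_apply, Pi.sub_apply, Pi.smul_apply, smul_eq_mul]
        linear_combination (xs i) * hab
      rw [h0, Matrix.mulVec_add, Matrix.mulVec_smul, Matrix.mulVec_smul]
    calc Real.sqrt (δ ^ 2 + (a • x + b • y - xs) ⬝ᵥ M *ᵥ (a • x + b • y - xs))
        = ‖Wv δ (B *ᵥ (a • x + b • y - xs))‖ := hg _
      _ = ‖a • Wv δ (B *ᵥ (x - xs)) + b • Wv δ (B *ᵥ (y - xs))‖ := by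
          rw [hzc, Wv_combo δ a b hab]
      _ ≤ a * ‖Wv δ (B *ᵥ (x - xs))‖ + b * ‖Wv δ (B *ᵥ (y - xs))‖ := by
          refine (norm_add_le _ _).trans ?_
          rw [norm_smul, norm_smul, Real.norm_eq_abs, Real.norm_eq_abs,
            abs_of_nonneg ha, abs_of_nonneg hb]
      _ ≤ a * (c ⬝ᵥ x + d) + b * (c ⬝ᵥ y + d) :=
          add_le_add (mul_le_mul_of_nonneg_left hx' ha) (mul_le_mul_of_nonneg_left hy' hb)
      _ = c ⬝ᵥ (a • x + b • y) + d := by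
          rw [dotProduct_add, dotProduct_smul, dotProduct_smul,
            smul_eq_mul, smul_eq_mul]
          linear_combination d * hab
  · -- Boundedness characterization
    obtain ⟨x₀, hx₀⟩ := hne
    have hx₀' : Real.sqrt (δ ^ 2 + (x₀ - xs) ⬝ᵥ M *ᵥ (x₀ - xs)) ≤ c ⬝ᵥ x₀ + d :=
      (hmem x₀).1 hx₀
    constructor
    · -- bounded → posdef ∧ < 1
      intro hb
      have hposdef : M.PosDef := by
        by_contra hpd
        rw [Matrix.posDef_iff_dotProduct_mulVec] at hpd
        push_neg at hpd
        obtain ⟨v, hv0, hvle⟩ := hpd hM.1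
        have hstar : star v = v := by ext i; simp
        rw [hstar] at hvle
        have hv00 : v ⬝ᵥ M *ᵥ v = 0 := le_antisymm hvle (hqnn v)
        have hMv : M *ᵥ v = 0 := by
          have := (hM.dotProduct_mulVec_zero_iff v).1 (by rw [hstar]; exact hv00)
          exact this
        set w : Fin n → ℝ := if 0 ≤ c ⬝ᵥ v then v else -v with hw
        have hw0 : w ≠ 0 := by
          rw [hw]; split_ifs with h
          · exact hv0
          · exact neg_ne_zero.2 hv0
        have hMw : M *ᵥ w = 0 := by
          rw [hw]; split_ifs with h
          · exact hMv
          · rw [Matrix.mulVec_neg, hMv, neg_zero]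
        have hcw : 0 ≤ c ⬝ᵥ w := by
          rw [hw]; split_ifs with h
          · exact h
          · rw [dotProduct_neg]; linarith [not_le.1 h]
        refine absurd hb (unbounded_of_rays fun T => ?_)
        obtain ⟨t, ht0, -, htT⟩ := ray_norm_big x₀ w hw0 0 T
        refine ⟨x₀ + t • w, ?_, htT⟩
        show 0 ≤ f (x₀ + t • w)
        rw [hmem]
        have hsub : x₀ + t • w - xs = (x₀ - xs) + t • w := by
          ext i; simp; ring
        have hqsame : (x₀ + t • w - xs) ⬝ᵥ M *ᵥ (x₀ + t • w - xs)
            = (x₀ - xs) ⬝ᵥ M *ᵥ (x₀ - xs) := by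
          rw [hsub, Matrix.mulVec_add, Matrix.mulVec_smul, hMw, smul_zero, add_zero,
            add_dotProduct, smul_dotProduct]
          have hwMy : w ⬝ᵥ M *ᵥ (x₀ - xs) = 0 := by
            rw [Matrix.dotProduct_mulVec, ← Matrix.mulVec_transpose, hMt, hMw,
              zero_dotProduct]
          rw [hwMy, smul_zero, add_zero]
        have hcxt : c ⬝ᵥ (x₀ + t • w) = c ⬝ᵥ x₀ + t * (c ⬝ᵥ w) := by
          rw [dotProduct_add, dotProduct_smul, smul_eq_mul]
        rw [hqsame, hcxt]
        nlinarith [hx₀']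
      refine ⟨hposdef, ?_⟩
      by_contra hs
      push_neg at hs
      set s := c ⬝ᵥ M⁻¹ *ᵥ c with hsdef
      obtain ⟨hs0, hcs⟩ := key hposdef
      have hdetM : IsUnit M.det := isUnit_iff_ne_zero.2 hposdef.det_pos.ne'
      set w : Fin n → ℝ := M⁻¹ *ᵥ c with hwdef
      have hMw : M *ᵥ w = c := by
        rw [hwdef, Matrix.mulVec_mulVec, Matrix.mul_nonsing_inv _ hdetM, Matrix.one_mulVec]
      have hwMw : w ⬝ᵥ M *ᵥ w = s := by rw [hMw, dotProduct_comm]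
      have hcw : c ⬝ᵥ w = s := rfl
      have hw0 : w ≠ 0 := by
        intro h0
        rw [h0, dotProduct_zero] at hcw
        rw [← hcw] at hs
        linarith
      set e : ℝ := c ⬝ᵥ xs + d with hedef
      -- membership of ray points
      have hray : ∀ t : ℝ, 0 ≤ t →
          Real.sqrt (δ ^ 2 + t ^ 2 * s) ≤ e + t * s → 0 ≤ f (xs + t • w) := by
        intro t ht0 hcond
        rw [hmem]
        have hsub : xs + t • w - xs = t • w := by ext i; simp
        have hq : (t • w) ⬝ᵥ M *ᵥ (t • w) = t ^ 2 * s := by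
          rw [Matrix.mulVec_smul, smul_dotProduct, dotProduct_smul, hwMw,
            smul_eq_mul, smul_eq_mul]
          ring
        have hc : c ⬝ᵥ (xs + t • w) + d = e + t * s := by
          rw [dotProduct_add, dotProduct_smul, hcw, smul_eq_mul, hedef]
          ring
        rw [hsub, hq, hc]
        exact hcond
      refine absurd hb (unbounded_of_rays fun T => ?_)
      rcases lt_or_eq_of_le hs with hs1 | hs1
      · -- 1 < s
        have hsq1 : 1 < Real.sqrt s := by
          rw [show (1:ℝ) = Real.sqrt 1 by rw [Real.sqrt_one]]
          exact Real.sqrt_lt_sqrt (by norm_num) hs1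
        have hgap : 0 < s - Real.sqrt s := by
          have : Real.sqrt s * 1 < Real.sqrt s * Real.sqrt s :=
            mul_lt_mul_of_pos_left hsq1 (by linarith)
          rw [Real.mul_self_sqrt hs0] at this
          linarith
        obtain ⟨t, ht0, htbig, htT⟩ := ray_norm_big xs w hw0 ((δ - e) / (s - Real.sqrt s)) T
        refine ⟨xs + t • w, hray t ht0 ?_, htT⟩
        have h1 : Real.sqrt (δ ^ 2 + t ^ 2 * s) ≤ δ + t * Real.sqrt s := by
          have hts : (t * Real.sqrt s) ^ 2 = t ^ 2 * s := by
            rw [mul_pow, Real.sq_sqrt hs0]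
          have h2 : δ ^ 2 + t ^ 2 * s ≤ (δ + t * Real.sqrt s) ^ 2 := by
            nlinarith [hts, mul_nonneg (mul_nonneg hδ ht0) (Real.sqrt_nonneg s)]
          calc Real.sqrt (δ ^ 2 + t ^ 2 * s) ≤ Real.sqrt ((δ + t * Real.sqrt s) ^ 2) :=
                Real.sqrt_le_sqrt h2
            _ = δ + t * Real.sqrt s := Real.sqrt_sq (by positivity)
        have h3 : δ - e ≤ t * (s - Real.sqrt s) := (div_le_iff₀ hgap).1 htbig
        nlinarith
      · -- s = 1
        have hecert : Real.sqrt ((x₀ - xs) ⬝ᵥ M *ᵥ (x₀ - xs)) ≤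
            Real.sqrt (δ ^ 2 + (x₀ - xs) ⬝ᵥ M *ᵥ (x₀ - xs)) :=
          Real.sqrt_le_sqrt (by nlinarith)
        have hcx₀ : c ⬝ᵥ x₀ + d = c ⬝ᵥ (x₀ - xs) + e := by
          rw [hedef]
          have : c ⬝ᵥ x₀ = c ⬝ᵥ ((x₀ - xs) + xs) := by congr 1; ext i; simp
          rw [this, dotProduct_add]
          ring
        have hcsy := hcs (x₀ - xs)
        rw [← hs1, Real.sqrt_one, one_mul] at hcsy
        have he0 : 0 ≤ e := by
          rw [hcx₀] at hx₀'
          linarith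
        rcases lt_or_eq_of_le he0 with he1 | he1
        · -- 0 < e
          obtain ⟨t, ht0, htbig, htT⟩ := ray_norm_big xs w hw0 (δ ^ 2 / (2 * e)) T
          refine ⟨xs + t • w, hray t ht0 ?_, htT⟩
          rw [← hs1]
          have h2 : δ ^ 2 ≤ 2 * e * t := by
            rw [div_le_iff₀ (by linarith)] at htbig
            linarith
          have h3 : δ ^ 2 + t ^ 2 * 1 ≤ (e + t * 1) ^ 2 := by nlinarith
          calc Real.sqrt (δ ^ 2 + t ^ 2 * 1) ≤ Real.sqrt ((e + t * 1) ^ 2) :=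
                Real.sqrt_le_sqrt h3
            _ = e + t * 1 := Real.sqrt_sq (by positivity)
        · -- e = 0, forces δ = 0
          have hδ0 : δ = 0 := by
            have hchain : Real.sqrt (δ ^ 2 + (x₀ - xs) ⬝ᵥ M *ᵥ (x₀ - xs)) ≤
                Real.sqrt ((x₀ - xs) ⬝ᵥ M *ᵥ (x₀ - xs)) := by
              rw [hcx₀, ← he1, add_zero] at hx₀'
              linarith
            have h4 : δ ^ 2 + (x₀ - xs) ⬝ᵥ M *ᵥ (x₀ - xs) ≤
                (x₀ - xs) ⬝ᵥ M *ᵥ (x₀ - xs) :=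
              (Real.sqrt_le_sqrt_iff (hqnn _)).1 hchain
            nlinarith [sq_nonneg δ, hδ]
          obtain ⟨t, ht0, -, htT⟩ := ray_norm_big xs w hw0 0 T
          refine ⟨xs + t • w, hray t ht0 ?_, htT⟩
          rw [hδ0, ← hs1, ← he1]
          rw [show (0:ℝ) ^ 2 + t ^ 2 * 1 = t ^ 2 by ring, Real.sqrt_sq ht0]
          linarith
    · -- posdef ∧ < 1 → bounded
      rintro ⟨hd, hs⟩
      obtain ⟨hs0, hcs⟩ := key hd
      set s := c ⬝ᵥ M⁻¹ *ᵥ c with hsdef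
      set a := Real.sqrt s with hadef
      have ha0 : 0 ≤ a := Real.sqrt_nonneg s
      have ha1 : a < 1 := by
        rw [hadef, show (1:ℝ) = Real.sqrt 1 by rw [Real.sqrt_one]]
        exact Real.sqrt_lt_sqrt hs0 hs
      have hdetB : IsUnit B.det := by
        rw [isUnit_iff_ne_zero]
        intro h0
        have : M.det = 0 := by rw [← hB2, Matrix.det_mul, h0, mul_zero]
        exact hd.det_pos.ne' this
      obtain ⟨K, hK0, hKb⟩ := exists_mulVec_bound B⁻¹
      set e : ℝ := c ⬝ᵥ xs + d with hedef
      rw [isBounded_iff_forall_norm_le]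
      refine ⟨K * (e / (1 - a)) + ‖xs‖, fun x hx => ?_⟩
      have hx' := (hmem x).1 hx
      set y : Fin n → ℝ := x - xs with hydef
      set t : ℝ := Real.sqrt (y ⬝ᵥ M *ᵥ y) with htdef
      have ht0 : 0 ≤ t := Real.sqrt_nonneg _
      have hcx : c ⬝ᵥ x + d = c ⬝ᵥ y + e := by
        rw [hedef, hydef]
        have : c ⬝ᵥ x = c ⬝ᵥ ((x - xs) + xs) := by congr 1; ext i; simp
        rw [this, dotProduct_add]
        ring
      have h5 : t ≤ a * t + e := by
        have h5a : t ≤ Real.sqrt (δ ^ 2 + y ⬝ᵥ M *ᵥ y) :=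
          Real.sqrt_le_sqrt (by nlinarith)
        have h5b := hcs y
        rw [hcx] at hx'
        calc t ≤ Real.sqrt (δ ^ 2 + y ⬝ᵥ M *ᵥ y) := h5a
          _ ≤ c ⬝ᵥ y + e := hx'
          _ ≤ a * t + e := by rw [hadef, htdef]; linarith [h5b]
      have h6 : t ≤ e / (1 - a) := by
        rw [le_div_iff₀ (by linarith)]
        nlinarith
      have hyb : ‖y‖ ≤ K * t := by
        have hyeq : y = B⁻¹ *ᵥ (B *ᵥ y) := by
          rw [Matrix.mulVec_mulVec, Matrix.nonsing_inv_mul _ hdetB, Matrix.one_mulVec]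
        calc ‖y‖ = ‖B⁻¹ *ᵥ (B *ᵥ y)‖ := by rw [← hyeq]
          _ ≤ K * ‖B *ᵥ y‖ := hKb _
          _ ≤ K * Real.sqrt ((B *ᵥ y) ⬝ᵥ (B *ᵥ y)) :=
              mul_le_mul_of_nonneg_left (pinorm_le_sqrt_dot _) hK0
          _ = K * t := by rw [htdef, hquad]
      have hxy : ‖x‖ ≤ ‖y‖ + ‖xs‖ := by
        have : x = y + xs := by rw [hydef]; ext i; simp
        rw [this]
        exact norm_add_le _ _
      have h7 : K * t ≤ K * (e / (1 - a)) := mul_le_mul_of_nonneg_left h6 hK0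
      linarith
end
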